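/- arXiv:2511.23255 — 3 statements merged into one kernel-verified Lean document; each statement's English description precedes it below -/
import Mathlib

section
/- Let $R$ be a commutative $\mathbb{Q}$-algebra, and let $A, B \in R\langle\langle e_0,e_1\rangle\rangle$ with $A_{e_0^n} = B_{e_0^n} = 0$ for all $n \ge 1$ and $B_\emptyset = 0$ (the constant coefficient of $B$ vanishes). Let $A(e_0, B)$ denote the series obtained by substituting $B$ for each occurrence of $e_1$ in $A$. Then for every word $w$ on $\{e_0, e_1\}$ containing at least one $e_1$, the coefficient satisfies $A(e_0,B)_w = \sum \big(\prod_{i=1}^r B_{w_i}\big) A_{w/(w_i)_i}$, where the sum is over all $r \ge 1$ and all $e_1$-segments $(w_1,\dots,w_r)$ of $w$, i.e. all factorizations $w = a_0 w_1 a_1 \cdots a_{r-1} w_r a_r$ with each $a_j$ a (possibly empty) power of $e_0$ and each $w_i$ a word containing at least one $e_1$, and $w/(w_i)_i = a_0 e_1 a_1 \cdots a_{r-1} e_1 a_r$ is the contraction replacing each $w_i$ by $e_1$. -/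
open scoped Classical

/-- `mCoeff B u w` is the coefficient of the word `w` in the noncommutative monomial
obtained from the word `u` by substituting the series `B` for each letter `e₁ = true`
(the letter `e₀ = false` is kept). -/
def mCoeff {R : Type*} [CommRing R] (B : List Bool → R) : List Bool → List Bool → R
  | [], w => if w = [] then 1 else 0
  | false :: u, false :: w' => mCoeff B u w'
  | false :: _, _ => 0
  | true :: u, w =>
      ∑ i ∈ Finset.range (w.length + 1), B (w.take i) * mCoeff B u (w.drop i)

/-- `substCoeff A B w` is the coefficient of `w` in the series `A(e₀, B)` obtained by
substituting `B` for each occurrence of `e₁` in `A`.  Since `B` has zero constant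
term, only words `u` of length at most `|w|` contribute, so the sum is finite. -/
noncomputable def substCoeff {R : Type*} [CommRing R] (A B : List Bool → R)
    (w : List Bool) : R :=
  ∑ n ∈ Finset.range (w.length + 1),
    ∑ f : Fin n → Bool, A (List.ofFn f) * mCoeff B (List.ofFn f) w

/-- Given a word `w` and monotone cut data `b`, `segPart w b k` is the `k`-th part of
the factorization of `w` determined by the cut points `b`. -/
def segPart (w : List Bool) {m : ℕ} (b : Fin (m + 1) → Fin (w.length + 1)) (k : Fin m) :
    List Bool :=
  (w.take (b k.succ : ℕ)).drop (b k.castSucc : ℕ)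


namespace Stmt12Aux
variable {R : Type*} [CommRing R]

def Gval (B : List Bool → R) : List Bool → List ℕ → List Bool → R
  | [], [], w => if w = [] then 1 else 0
  | false :: u, a :: d, w => (if w.take a = [false] then 1 else 0) * Gval B u d (w.drop a)
  | true :: u, a :: d, w => B (w.take a) * Gval B u d (w.drop a)
  | _, _, _ => 0

def CutF (n m : ℕ) : Finset (Fin n → ℕ) :=
  (Fintype.piFinset fun _ => Finset.range (m+1)).filter fun d => ∑ i, d i = m

lemma mem_CutF {n m : ℕ} {d : Fin n → ℕ} : d ∈ CutF n m ↔ ∑ i, d i = m := by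
  constructor
  · intro h; exact (Finset.mem_filter.1 h).2
  · intro h
    refine Finset.mem_filter.2 ⟨Fintype.mem_piFinset.2 fun i => ?_, h⟩
    rw [Finset.mem_range, Nat.lt_succ_iff, ← h]
    exact Finset.single_le_sum (fun _ _ => Nat.zero_le _) (Finset.mem_univ i)

lemma sum_CutF_succ {M : Type*} [AddCommMonoid M] (n m : ℕ) (F : (Fin (n+1) → ℕ) → M) :
    ∑ d ∈ CutF (n+1) m, F d
      = ∑ i ∈ Finset.range (m+1), ∑ d ∈ CutF n (m - i), F (Fin.cons i d) := by
  rw [Finset.sum_sigma' (Finset.range (m+1)) (fun i => CutF n (m - i))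
    (fun i d => F (Fin.cons i d))]
  refine Finset.sum_nbij' (fun d => ⟨d 0, Fin.tail d⟩) (fun p => Fin.cons p.1 p.2)
    ?_ ?_ ?_ ?_ ?_
  · intro d hd
    rw [mem_CutF, Fin.sum_univ_succ] at hd
    have h1 : d 0 ≤ m := by omega
    have h2 : ∑ i : Fin n, Fin.tail d i = m - d 0 := by
      have h3 : ∑ i : Fin n, Fin.tail d i = ∑ i : Fin n, d i.succ :=
        Finset.sum_congr rfl (fun i _ => rfl)
      omega
    exact Finset.mem_sigma.2 ⟨Finset.mem_range.2 (Nat.lt_succ_of_le h1), mem_CutF.2 h2⟩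
  · rintro ⟨i, d⟩ hp
    rw [Finset.mem_sigma, Finset.mem_range, Nat.lt_succ_iff] at hp
    obtain ⟨hi, hd⟩ := hp
    rw [mem_CutF] at hd
    have hi' : i ≤ m := hi
    have hd' : ∑ j : Fin n, d j = m - i := hd
    refine mem_CutF.2 ?_
    show ∑ j : Fin (n+1), (Fin.cons i d : Fin (n+1) → ℕ) j = m
    rw [Fin.sum_univ_succ]
    simp only [Fin.cons_zero, Fin.cons_succ]
    omega
  · intro d _; exact Fin.cons_self_tail d
  · rintro ⟨i, d⟩ _
    simp [Fin.tail_cons]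
  · intro d _; rw [Fin.cons_self_tail]

lemma gval_length_ne {B : List Bool → R} {u : List Bool} {d : List ℕ} {w : List Bool}
    (h : u.length ≠ d.length) : Gval B u d w = 0 := by
  induction u generalizing d w with
  | nil => cases d with
    | nil => simp at h
    | cons a d => rfl
  | cons x u ih =>
    cases d with
    | nil => cases x <;> rfl
    | cons a d =>
      cases x <;> simp only [Gval] <;> rw [ih (by simpa using h)] <;> ring

lemma mCoeff_eq_sum (B : List Bool → R) :
    ∀ (u w : List Bool), mCoeff B u w = ∑ d ∈ CutF u.length w.length, Gval B u (List.ofFn d) w := by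
  intro u
  induction u with
  | nil =>
    intro w
    show (if w = [] then (1:R) else 0) = _
    rcases eq_or_ne w [] with rfl | hw
    · rw [if_pos rfl]
      have : CutF 0 0 = {(finZeroElim : Fin 0 → ℕ)} := by
        apply Finset.eq_singleton_iff_unique_mem.2
        constructor
        · exact mem_CutF.2 (by simp)
        · intro d _; exact funext fun i => i.elim0
      simp [this, Gval]
    · rw [if_neg hw]
      symm
      apply Finset.sum_eq_zero
      intro d _
      show Gval B [] (List.ofFn d) w = 0
      simp [Gval, hw]
  | cons x u ih =>
    intro w
    rw [show (x :: u).length = u.length + 1 from rfl, sum_CutF_succ]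
    have hofn : ∀ (i : ℕ) (d : Fin u.length → ℕ),
        List.ofFn (Fin.cons i d : Fin (u.length+1) → ℕ) = i :: List.ofFn d := by
      intro i d
      rw [List.ofFn_succ]
      simp
    cases x with
    | true =>
      show ∑ i ∈ Finset.range (w.length + 1), B (w.take i) * mCoeff B u (w.drop i) = _
      refine Finset.sum_congr rfl fun i hi => ?_
      rw [Finset.mem_range, Nat.lt_succ_iff] at hi
      rw [ih (w.drop i), Finset.mul_sum]
      rw [List.length_drop]
      refine Finset.sum_congr rfl fun d _ => ?_
      rw [hofn]
      rfl
    | false =>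
      rcases w with _ | ⟨c, w'⟩
      · show (0:R) = _
        symm
        apply Finset.sum_eq_zero; intro i hi
        apply Finset.sum_eq_zero; intro d _
        rw [hofn]
        show (if List.take i [] = [false] then (1:R) else 0) * _ = 0
        simp
      · have key : ∀ i ∈ Finset.range ((c :: w').length + 1), i ≠ 1 →
            ∑ d ∈ CutF u.length ((c::w').length - i),
              Gval B (false :: u) (List.ofFn (Fin.cons i d)) (c :: w') = 0 := by
          intro i hi hi1
          rw [Finset.mem_range, Nat.lt_succ_iff] at hi
          apply Finset.sum_eq_zero; intro d _
          rw [hofn]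
          show (if List.take i (c :: w') = [false] then (1:R) else 0) * _ = 0
          have : List.take i (c :: w') ≠ [false] := by
            intro hcon
            have hlen := congrArg List.length hcon
            rw [List.length_take, Nat.min_eq_left hi] at hlen
            simp at hlen
            exact hi1 hlen
          rw [if_neg this, zero_mul]
        rw [Finset.sum_eq_single_of_mem 1 (by simp) key]
        rcases c with _ | _
        · -- c = false
          show mCoeff B u w' = _
          rw [ih w']
          show _ = ∑ d ∈ CutF u.length w'.length, Gval B (false :: u) (List.ofFn (Fin.cons 1 d)) (false :: w')
          refine Finset.sum_congr rfl fun d _ => ?_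
          rw [hofn]
          show Gval B u (List.ofFn d) w' = (if [false] = [false] then (1:R) else 0) * Gval B u (List.ofFn d) w'
          rw [if_pos rfl, one_mul]
        · -- c = true
          show (0:R) = _
          symm
          apply Finset.sum_eq_zero; intro d _
          rw [hofn]
          show (if List.take 1 (true :: w') = [false] then (1:R) else 0) * _ = 0
          simp


def ok : List Bool → List ℕ → List Bool → Prop
  | [], [], w => w = []
  | false :: u, a :: d, w => a = 1 ∧ w.take 1 = [false] ∧ ok u d (w.drop 1)
  | true :: u, a :: d, w => true ∈ w.take a ∧ a ≤ w.length ∧ ok u d (w.drop a)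
  | _, _, _ => False

lemma B_eq_zero {B : List Bool → R} (hB : ∀ n, 1 ≤ n → B (List.replicate n false) = 0)
    (hB0 : B [] = 0) {s : List Bool} (hs : true ∉ s) : B s = 0 := by
  have hrep : s = List.replicate s.length false := by
    apply List.eq_replicate_of_mem
    intro b hb
    cases b
    · rfl
    · exact absurd hb hs
  rcases Nat.eq_zero_or_pos s.length with h | h
  · rw [hrep, h]; simpa using hB0
  · rw [hrep]; exact hB _ h

lemma ok_of_gval_ne {B : List Bool → R} (hB : ∀ n, 1 ≤ n → B (List.replicate n false) = 0)
    (hB0 : B [] = 0) :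
    ∀ (u : List Bool) (d : List ℕ) (w : List Bool), d.sum = w.length →
      Gval B u d w ≠ 0 → ok u d w := by
  intro u
  induction u with
  | nil =>
    intro d w hsum hg
    cases d with
    | nil =>
      show w = []
      by_contra hne
      exact hg (by simp [Gval, hne])
    | cons a d => exact absurd rfl hg
  | cons x u ih =>
    intro d w hsum hg
    cases d with
    | nil => cases x <;> exact absurd rfl hg
    | cons a d =>
      have hale : a ≤ w.length := by
        simp only [List.sum_cons] at hsum; omega
      cases x with
      | false =>
        have h1 : w.take a = [false] := by
          by_contra hne
          exact hg (by simp only [Gval, if_neg hne, zero_mul])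
        have ha1 : a = 1 := by
          have := congrArg List.length h1
          rw [List.length_take, Nat.min_eq_left hale] at this
          simpa using this
        subst ha1
        refine ⟨rfl, h1, ih d (w.drop 1) ?_ ?_⟩
        · simp only [List.sum_cons] at hsum
          rw [List.length_drop]; omega
        · intro hz
          exact hg (by simp only [Gval, hz, mul_zero])
      | true =>
        have hBne : B (w.take a) ≠ 0 := by
          intro hz
          exact hg (by simp only [Gval, hz, zero_mul])
        have htr : true ∈ w.take a := by
          by_contra hne
          exact hBne (B_eq_zero hB hB0 hne)
        refine ⟨htr, hale, ih d (w.drop a) ?_ ?_⟩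
        · simp only [List.sum_cons] at hsum
          rw [List.length_drop]; omega
        · intro hz
          exact hg (by simp only [Gval, hz, mul_zero])

lemma ok_facts :
    ∀ (u : List Bool) (d : List ℕ) (w : List Bool), ok u d w →
      u.length = d.length ∧ u.length ≤ w.length ∧ d.sum = w.length ∧
        u.count true ≤ w.length ∧ (true ∈ w ↔ true ∈ u) := by
  intro u
  induction u with
  | nil =>
    intro d w h
    cases d with
    | nil =>
      have hw : w = [] := h
      subst hw
      simp
    | cons a d => exact absurd h (by simp [ok])
  | cons x u ih =>
    intro d w h
    cases d with
    | nil => cases x <;> exact absurd h (by simp [ok])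
    | cons a d =>
      cases x with
      | false =>
        obtain ⟨ha, htake, hrest⟩ := h
        subst ha
        rcases w with _ | ⟨c, w'⟩
        · simp at htake
        · have hc : c = false := by simpa using htake
          obtain ⟨l1, l2, l3, l4, l5⟩ := ih d w' hrest
          subst hc
          refine ⟨by simpa using l1, by simpa using l2,
            by simp only [List.sum_cons, List.length_cons]; omega, ?_, ?_⟩
          · have hcc : List.count true (false :: u) = List.count true u := by
              simp [List.count_cons]
            rw [hcc]; simp only [List.length_cons]; omega
          · simpa using l5
      | true =>
        obtain ⟨htr, hale, hrest⟩ := h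
        obtain ⟨l1, l2, l3, l4, l5⟩ := ih d (w.drop a) hrest
        have ha1 : 1 ≤ a := by
          rcases a with _ | a
          · simp at htr
          · omega
        have hld : (w.drop a).length = w.length - a := List.length_drop
        refine ⟨by simpa using l1, ?_, ?_, ?_, ?_⟩
        · simp only [List.length_cons]; omega
        · simp only [List.sum_cons]; omega
        · have hcc : List.count true (true :: u) = List.count true u + 1 := by
            simp [List.count_cons]
          rw [hcc]; omega
        · constructor
          · intro _; simp
          · intro _
            have : true ∈ w.take a := htr
            have := List.take_append_drop a w
            rw [← this]
            exact List.mem_append.2 (Or.inl htr)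

def bl : List Bool → List ℕ → ℕ × List ℕ
  | [], _ => (0, [])
  | false :: u, a :: d => (a + (bl u d).1, (bl u d).2)
  | true :: u, a :: d => (0, a :: (bl u d).1 :: (bl u d).2)
  | _ :: _, [] => (0, [])

def blL (u : List Bool) (d : List ℕ) : List ℕ := (bl u d).1 :: (bl u d).2

def ex : Bool → List ℕ → List Bool × List ℕ
  | _, [] => ([], [])
  | false, a :: l => (List.replicate a false ++ (ex true l).1, List.replicate a 1 ++ (ex true l).2)
  | true, a :: l => (true :: (ex false l).1, a :: (ex false l).2)

def PB (B : List Bool → R) : Bool → List ℕ → List Bool → R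
  | _, [], _ => 1
  | fl, a :: l, w => (if fl then B (w.take a) else 1) * PB B (!fl) l (w.drop a)

def Ctr : Bool → List ℕ → List Bool → List Bool
  | _, [], _ => []
  | fl, a :: l, w => (if fl then [true] else w.take a) ++ Ctr (!fl) l (w.drop a)

def Pok : Bool → List ℕ → List Bool → Prop
  | _, [], _ => True
  | fl, a :: l, w => (if fl then true ∈ w.take a else true ∉ w.take a) ∧ Pok (!fl) l (w.drop a)

lemma take_one_eq {w : List Bool} (h : w.take 1 = [false]) : w = false :: w.drop 1 := by
  rcases w with _ | ⟨c, w'⟩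
  · simp at h
  · simp at h
    simp [h]

/-- K1 -/
lemma bl_sum : ∀ (u : List Bool) (d : List ℕ), u.length = d.length →
    (bl u d).1 + (bl u d).2.sum = d.sum := by
  intro u
  induction u with
  | nil =>
    intro d h
    cases d with
    | nil => simp [bl]
    | cons a d => simp at h
  | cons x u ih =>
    intro d h
    cases d with
    | nil => simp at h
    | cons a d =>
      have h' : u.length = d.length := by simpa using h
      cases x with
      | false =>
        simp only [bl, List.sum_cons]
        have := ih d h'
        omega
      | true =>
        simp only [bl, List.sum_cons]
        have := ih d h'
        omega

/-- K2 -/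
lemma bl_len : ∀ (u : List Bool) (d : List ℕ), u.length = d.length →
    (bl u d).2.length = 2 * u.count true := by
  intro u
  induction u with
  | nil =>
    intro d h
    cases d with
    | nil => simp [bl]
    | cons a d => simp at h
  | cons x u ih =>
    intro d h
    cases d with
    | nil => simp at h
    | cons a d =>
      have h' : u.length = d.length := by simpa using h
      cases x with
      | false =>
        simp only [bl]
        rw [ih d h']
        simp [List.count_cons]
      | true =>
        simp only [bl, List.length_cons]
        rw [ih d h']
        have : List.count true (true :: u) = List.count true u + 1 := by
          simp [List.count_cons]
        rw [this]
        ring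

lemma blL_nil : blL [] ([] : List ℕ) = [0] := rfl
lemma blL_false (u : List Bool) (d : List ℕ) (a : ℕ) :
    blL (false :: u) (a :: d) = (a + (bl u d).1) :: (bl u d).2 := rfl
lemma blL_true (u : List Bool) (d : List ℕ) (a : ℕ) :
    blL (true :: u) (a :: d) = 0 :: a :: blL u d := rfl
lemma blL_eq (u : List Bool) (d : List ℕ) : blL u d = (bl u d).1 :: (bl u d).2 := rfl

lemma PB_nil {B : List Bool → R} (fl : Bool) (w : List Bool) : PB B fl [] w = 1 := rfl
lemma PB_cons {B : List Bool → R} (fl : Bool) (a : ℕ) (l : List ℕ) (w : List Bool) :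
    PB B fl (a :: l) w = (if fl then B (w.take a) else 1) * PB B (!fl) l (w.drop a) := rfl
lemma Ctr_nil (fl : Bool) (w : List Bool) : Ctr fl [] w = [] := rfl
lemma Ctr_cons (fl : Bool) (a : ℕ) (l : List ℕ) (w : List Bool) :
    Ctr fl (a :: l) w = (if fl then [true] else w.take a) ++ Ctr (!fl) l (w.drop a) := rfl
lemma Pok_nil (fl : Bool) (w : List Bool) : Pok fl [] w := trivial
lemma Pok_cons (fl : Bool) (a : ℕ) (l : List ℕ) (w : List Bool) :
    Pok fl (a :: l) w ↔
      (if fl then true ∈ w.take a else true ∉ w.take a) ∧ Pok (!fl) l (w.drop a) := Iff.rfl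

lemma Gval_t {B : List Bool → R} (u : List Bool) (d : List ℕ) (a : ℕ) (w : List Bool) :
    Gval B (true :: u) (a :: d) w = B (w.take a) * Gval B u d (w.drop a) := rfl
lemma Gval_f {B : List Bool → R} (u : List Bool) (d : List ℕ) (a : ℕ) (w : List Bool) :
    Gval B (false :: u) (a :: d) w
      = (if w.take a = [false] then 1 else 0) * Gval B u d (w.drop a) := rfl

lemma drop_one_add (n : ℕ) (c : Bool) (w : List Bool) :
    List.drop (1 + n) (c :: w) = List.drop n w := by
  rw [Nat.add_comm]; rfl

lemma take_one_add (n : ℕ) (c : Bool) (w : List Bool) :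
    List.take (1 + n) (c :: w) = c :: List.take n w := by
  rw [Nat.add_comm]; rfl

/-- K3 -/
lemma PB_blL {B : List Bool → R} :
    ∀ (u : List Bool) (d : List ℕ) (w : List Bool), ok u d w →
      PB B false (blL u d) w = Gval B u d w := by
  intro u
  induction u with
  | nil =>
    intro d w h
    cases d with
    | nil =>
      have hw : w = [] := h
      subst hw
      simp [blL, bl, PB, Gval]
    | cons a d => exact absurd h (by simp [ok])
  | cons x u ih =>
    intro d w h
    cases d with
    | nil => cases x <;> exact absurd h (by simp [ok])
    | cons a d =>
      cases x with
      | false =>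
        obtain ⟨ha, htake, hrest⟩ := h
        subst ha
        rcases w with _ | ⟨c, w'⟩
        · simp at htake
        have hc : c = false := by simpa using htake
        subst hc
        have hrest' : ok u d w' := hrest
        have key := ih d w' hrest'
        rw [blL_eq, PB_cons, if_neg (by simp), one_mul, Bool.not_false] at key
        rw [blL_false, PB_cons, if_neg (by simp), one_mul, Bool.not_false,
          drop_one_add, Gval_f]
        rw [if_pos (by simp), one_mul]
        exact key
      | true =>
        obtain ⟨htr, hale, hrest⟩ := h
        have key := ih d (w.drop a) hrest
        rw [blL_true, PB_cons, if_neg (by simp), one_mul, Bool.not_false,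
          PB_cons, if_pos rfl, Bool.not_true, List.drop_zero, Gval_t, key]

/-- K4 -/
lemma Ctr_blL :
    ∀ (u : List Bool) (d : List ℕ) (w : List Bool), ok u d w →
      Ctr false (blL u d) w = u := by
  intro u
  induction u with
  | nil =>
    intro d w h
    cases d with
    | nil =>
      have hw : w = [] := h
      subst hw
      simp [blL, bl, Ctr]
    | cons a d => exact absurd h (by simp [ok])
  | cons x u ih =>
    intro d w h
    cases d with
    | nil => cases x <;> exact absurd h (by simp [ok])
    | cons a d =>
      cases x with
      | false =>
        obtain ⟨ha, htake, hrest⟩ := h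
        subst ha
        rcases w with _ | ⟨c, w'⟩
        · simp at htake
        have hc : c = false := by simpa using htake
        subst hc
        have hrest' : ok u d w' := hrest
        have key := ih d w' hrest'
        rw [blL_eq, Ctr_cons, if_neg (by simp), Bool.not_false] at key
        rw [blL_false, Ctr_cons, if_neg (by simp), Bool.not_false,
          drop_one_add, take_one_add, List.cons_append, key]
      | true =>
        obtain ⟨htr, hale, hrest⟩ := h
        have key := ih d (w.drop a) hrest
        rw [blL_true, Ctr_cons, if_neg (by simp), Bool.not_false,
          Ctr_cons, if_pos rfl, Bool.not_true, List.drop_zero,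
          List.take_zero, List.nil_append, List.singleton_append, key]

/-- K5 -/
lemma Pok_blL :
    ∀ (u : List Bool) (d : List ℕ) (w : List Bool), ok u d w →
      Pok false (blL u d) w := by
  intro u
  induction u with
  | nil =>
    intro d w h
    cases d with
    | nil =>
      have hw : w = [] := h
      subst hw
      exact ⟨by simp, trivial⟩
    | cons a d => exact absurd h (by simp [ok])
  | cons x u ih =>
    intro d w h
    cases d with
    | nil => cases x <;> exact absurd h (by simp [ok])
    | cons a d =>
      cases x with
      | false =>
        obtain ⟨ha, htake, hrest⟩ := h
        subst ha
        rcases w with _ | ⟨c, w'⟩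
        · simp at htake
        have hc : c = false := by simpa using htake
        subst hc
        have hrest' : ok u d w' := hrest
        have key := ih d w' hrest'
        rw [blL_eq, Pok_cons, if_neg (by simp), Bool.not_false] at key
        rw [blL_false, Pok_cons, if_neg (by simp), Bool.not_false,
          drop_one_add, take_one_add]
        refine ⟨?_, key.2⟩
        intro hmem
        rcases List.mem_cons.1 hmem with h1 | h1
        · exact Bool.noConfusion h1
        · exact key.1 h1
      | true =>
        obtain ⟨htr, hale, hrest⟩ := h
        have key := ih d (w.drop a) hrest
        rw [blL_true, Pok_cons, if_neg (by simp), Bool.not_false]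
        refine ⟨by simp, ?_⟩
        rw [Pok_cons, if_pos rfl, Bool.not_true, List.drop_zero]
        exact ⟨htr, key⟩

lemma ex_nil (fl : Bool) : ex fl [] = ([], []) := by cases fl <;> rfl
lemma ex_false (a : ℕ) (l : List ℕ) :
    ex false (a :: l) = (List.replicate a false ++ (ex true l).1,
      List.replicate a 1 ++ (ex true l).2) := rfl
lemma ex_true (a : ℕ) (l : List ℕ) :
    ex true (a :: l) = (true :: (ex false l).1, a :: (ex false l).2) := rfl

/-- K6 -/
lemma ok_replicate :
    ∀ (a : ℕ) (u' : List Bool) (d' : List ℕ) (w : List Bool),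
      true ∉ w.take a → a ≤ w.length → ok u' d' (w.drop a) →
        ok (List.replicate a false ++ u') (List.replicate a 1 ++ d') w := by
  intro a
  induction a with
  | zero => intro u' d' w _ _ h; simpa using h
  | succ a ih =>
    intro u' d' w hnt hle h
    rcases w with _ | ⟨c, w'⟩
    · simp at hle
    have hc : c = false := by
      by_contra hne
      have : c = true := by cases c <;> simp_all
      subst this
      exact hnt (by simp [List.take_succ_cons])
    subst hc
    show ok (false :: (List.replicate a false ++ u')) (1 :: (List.replicate a 1 ++ d')) (false :: w')
    refine ⟨rfl, by simp, ?_⟩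
    show ok (List.replicate a false ++ u') (List.replicate a 1 ++ d') w'
    apply ih
    · intro hmem
      exact hnt (by simp [List.take_succ_cons, hmem])
    · simpa using hle
    · simpa using h

/-- K7 -/
lemma ok_ex :
    ∀ (l : List ℕ) (fl : Bool) (w : List Bool), l.sum = w.length → Pok fl l w →
      ok (ex fl l).1 (ex fl l).2 w := by
  intro l
  induction l with
  | nil =>
    intro fl w hsum _
    rw [ex_nil]
    show ok [] [] w
    show w = []
    have : w.length = 0 := by simpa using hsum.symm
    exact List.length_eq_zero_iff.1 this
  | cons a l ih =>
    intro fl w hsum hpok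
    have hale : a ≤ w.length := by
      simp only [List.sum_cons] at hsum; omega
    have hsum' : l.sum = (w.drop a).length := by
      simp only [List.sum_cons] at hsum
      rw [List.length_drop]; omega
    obtain ⟨hp1, hp2⟩ := hpok
    cases fl with
    | false =>
      rw [ex_false]
      rw [if_neg (by simp)] at hp1
      rw [Bool.not_false] at hp2
      exact ok_replicate a _ _ w hp1 hale (ih true (w.drop a) hsum' hp2)
    | true =>
      rw [ex_true]
      rw [if_pos rfl] at hp1
      rw [Bool.not_true] at hp2
      exact ⟨hp1, hale, ih false (w.drop a) hsum' hp2⟩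

/-- K9a -/
lemma bl_replicate :
    ∀ (a : ℕ) (u : List Bool) (d : List ℕ),
      bl (List.replicate a false ++ u) (List.replicate a 1 ++ d)
        = (a + (bl u d).1, (bl u d).2) := by
  intro a
  induction a with
  | zero => intro u d; simp
  | succ a ih =>
    intro u d
    show bl (false :: (List.replicate a false ++ u)) (1 :: (List.replicate a 1 ++ d)) = _
    show (1 + (bl (List.replicate a false ++ u) (List.replicate a 1 ++ d)).1,
      (bl (List.replicate a false ++ u) (List.replicate a 1 ++ d)).2) = _
    rw [ih]
    have : 1 + (a + (bl u d).1) = a + 1 + (bl u d).1 := by omega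
    rw [this]

/-- K9 -/
lemma blL_ex : ∀ (l : List ℕ), Odd l.length → blL (ex false l).1 (ex false l).2 = l := by
  have main : ∀ (N : ℕ) (l : List ℕ), l.length ≤ N → Odd l.length →
      blL (ex false l).1 (ex false l).2 = l := by
    intro N
    induction N with
    | zero =>
      intro l hlen hodd
      have h0 : l.length = 0 := by omega
      rw [h0] at hodd
      simp at hodd
    | succ N ih =>
      intro l hlen hodd
      rcases l with _ | ⟨a, l⟩
      · simp at hodd
      rcases l with _ | ⟨b, l⟩
      · -- l = [a]
        have hx : ex false [a] = (List.replicate a false ++ [], List.replicate a 1 ++ []) := by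
          rw [ex_false, ex_nil]
        rw [hx]
        show blL (List.replicate a false ++ []) (List.replicate a 1 ++ []) = [a]
        rw [blL_eq, bl_replicate]
        show (a + (0:ℕ)) :: ([] : List ℕ) = [a]
        rw [Nat.add_zero]
      · -- l = a :: b :: l
        have hodd' : Odd l.length := by
          simp only [List.length_cons] at hodd ⊢
          rcases hodd with ⟨k, hk⟩
          rcases k with _ | k
          · omega
          · exact ⟨k, by omega⟩
        have hlen' : l.length ≤ N := by
          simp only [List.length_cons] at hlen
          omega
        have key := ih l (by omega) hodd'
        rw [ex_false, ex_true]
        rw [blL_eq, bl_replicate]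
        show (a + (bl (true :: (ex false l).1) (b :: (ex false l).2)).1)
            :: (bl (true :: (ex false l).1) (b :: (ex false l).2)).2 = a :: b :: l
        show (a + 0) :: (b :: (bl (ex false l).1 (ex false l).2).1
            :: (bl (ex false l).1 (ex false l).2).2) = a :: b :: l
        rw [Nat.add_zero, ← blL_eq, key]
  intro l hodd
  exact main l.length l le_rfl hodd

/-- K10 -/
lemma ex_blL : ∀ (u : List Bool) (d : List ℕ) (w : List Bool), ok u d w →
    ex false (blL u d) = (u, d) := by
  intro u
  induction u with
  | nil =>
    intro d w h
    cases d with
    | nil =>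
      rw [blL_nil]
      rw [ex_false, ex_nil]
      simp
    | cons a d => exact absurd h (by simp [ok])
  | cons x u ih =>
    intro d w h
    cases d with
    | nil => cases x <;> exact absurd h (by simp [ok])
    | cons a d =>
      cases x with
      | false =>
        obtain ⟨ha, htake, hrest⟩ := h
        subst ha
        rcases w with _ | ⟨c, w'⟩
        · simp at htake
        have hc : c = false := by simpa using htake
        subst hc
        have key := ih d w' hrest
        rw [blL_eq, ex_false] at key
        have k1 : List.replicate (bl u d).1 false ++ (ex true (bl u d).2).1 = u :=
          congrArg Prod.fst key
        have k2 : List.replicate (bl u d).1 1 ++ (ex true (bl u d).2).2 = d :=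
          congrArg Prod.snd key
        rw [blL_false, ex_false]
        have e1 : 1 + (bl u d).1 = (bl u d).1 + 1 := by omega
        rw [e1, List.replicate_succ, List.replicate_succ, List.cons_append, List.cons_append]
        simp only [Prod.mk.injEq]
        exact ⟨by rw [k1], by rw [k2]⟩
      | true =>
        obtain ⟨htr, hale, hrest⟩ := h
        have key := ih d (w.drop a) hrest
        rw [blL_true, ex_false, ex_true, key]
        simp

def seg (l : List ℕ) (w : List Bool) (j : ℕ) : List Bool :=
  (w.drop ((l.take j).sum)).take (l.getD j 0)

lemma seg_zero (a : ℕ) (l : List ℕ) (w : List Bool) : seg (a :: l) w 0 = w.take a := by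
  simp [seg]

lemma seg_succ (a : ℕ) (l : List ℕ) (w : List Bool) (k : ℕ) :
    seg (a :: l) w (k + 1) = seg l (w.drop a) k := by
  simp only [seg, List.take_succ_cons, List.sum_cons, List.getD_cons_succ, List.drop_drop]

lemma parity_zero (fl : Bool) : (((0:ℕ) + (if fl then 1 else 0)) % 2 = 1) ↔ fl = true := by
  cases fl <;> simp

lemma parity_succ (fl : Bool) (k : ℕ) :
    ((k + 1 + (if fl then 1 else 0)) % 2 = 1) ↔ ((k + (if !fl then 1 else 0)) % 2 = 1) := by
  cases fl <;> simp <;> omega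

/-- F1 -/
lemma prod_eq_PB {B : List Bool → R} :
    ∀ (l : List ℕ) (w : List Bool) (fl : Bool),
      (∏ k : Fin l.length,
          if (k.val + (if fl then 1 else 0)) % 2 = 1 then B (seg l w k.val) else 1)
        = PB B fl l w := by
  intro l
  induction l with
  | nil => intro w fl; simp [PB_nil]
  | cons a l ih =>
    intro w fl
    rw [show (a :: l).length = l.length + 1 from rfl, Fin.prod_univ_succ, PB_cons]
    congr 1
    · rcases fl with _ | _
      · rw [if_neg (by simp), if_neg (by simp)]
      · rw [if_pos (by simp), if_pos (by simp)]
        rw [show ((0 : Fin (l.length+1)) : ℕ) = 0 from rfl, seg_zero]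
    · rw [← ih (w.drop a) (!fl)]
      refine Finset.prod_congr rfl fun k _ => ?_
      rw [show ((k.succ : Fin (l.length+1)) : ℕ) = k.val + 1 from rfl]
      rw [seg_succ]
      rcases Nat.decEq ((k.val + (if !fl then 1 else 0)) % 2) 1 with h | h
      · rw [if_neg (by rw [(parity_succ fl k.val)]; exact h), if_neg h]
      · rw [if_pos (by rw [(parity_succ fl k.val)]; exact h), if_pos h]

/-- F2 -/
lemma flatten_eq_Ctr :
    ∀ (l : List ℕ) (w : List Bool) (fl : Bool),
      (List.ofFn fun k : Fin l.length =>
          if (k.val + (if fl then 1 else 0)) % 2 = 1 then [true] else seg l w k.val).flatten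
        = Ctr fl l w := by
  intro l
  induction l with
  | nil => intro w fl; simp [Ctr_nil]
  | cons a l ih =>
    intro w fl
    rw [show (a :: l).length = l.length + 1 from rfl, List.ofFn_succ, List.flatten_cons, Ctr_cons]
    congr 1
    · rcases fl with _ | _
      · rw [if_neg (by simp), if_neg (by simp)]
        rw [show ((0 : Fin (l.length+1)) : ℕ) = 0 from rfl, seg_zero]
      · rw [if_pos (by simp), if_pos (by simp)]
    · rw [← ih (w.drop a) (!fl)]
      refine congrArg List.flatten (congrArg List.ofFn (funext fun k => ?_))
      rw [show ((k.succ : Fin (l.length+1)) : ℕ) = k.val + 1 from rfl]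
      rw [seg_succ]
      rcases Nat.decEq ((k.val + (if !fl then 1 else 0)) % 2) 1 with h | h
      · rw [if_neg (by rw [(parity_succ fl k.val)]; exact h), if_neg h]
      · rw [if_pos (by rw [(parity_succ fl k.val)]; exact h), if_pos h]

/-- F3 -/
lemma forall_eq_Pok :
    ∀ (l : List ℕ) (w : List Bool) (fl : Bool),
      (∀ k : Fin l.length,
          (((k.val + (if fl then 1 else 0)) % 2 = 1) → true ∈ seg l w k.val) ∧
          (((k.val + (if fl then 1 else 0)) % 2 = 0) → true ∉ seg l w k.val))
        ↔ Pok fl l w := by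
  intro l
  induction l with
  | nil =>
    intro w fl
    constructor
    · intro _; exact Pok_nil fl w
    · intro _ k; exact absurd k.isLt (by simp)
  | cons a l ih =>
    intro w fl
    rw [show (a :: l).length = l.length + 1 from rfl]
    rw [Fin.forall_fin_succ, Pok_cons, ← ih (w.drop a) (!fl)]
    have hmod : ∀ j : ℕ, (j % 2 = 0) ↔ ¬(j % 2 = 1) := by intro j; omega
    constructor
    · rintro ⟨h0, hs⟩
      constructor
      · rcases fl with _ | _
        · rw [if_neg (by simp)]
          refine h0.2 ?_
          simp
        · rw [if_pos rfl]
          refine h0.1 ?_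
          simp
      · intro k
        have := hs k
        rw [show ((k.succ : Fin (l.length+1)) : ℕ) = k.val + 1 from rfl] at this
        rw [seg_succ] at this
        constructor
        · intro hp
          exact this.1 ((parity_succ fl k.val).2 hp)
        · intro hp
          refine this.2 ?_
          rw [hmod] at hp ⊢
          intro hc
          exact hp ((parity_succ fl k.val).1 hc)
    · rintro ⟨h0, hs⟩
      constructor
      · rw [show ((0 : Fin (l.length+1)) : ℕ) = 0 from rfl, seg_zero a l w]
        constructor
        · intro hp
          rw [parity_zero] at hp
          rw [hp, if_pos rfl] at h0
          exact h0
        · intro hp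
          rcases fl with _ | _
          · rw [if_neg (by simp)] at h0
            exact h0
          · simp at hp
      · intro k
        have := hs k
        rw [show ((k.succ : Fin (l.length+1)) : ℕ) = k.val + 1 from rfl, seg_succ]
        constructor
        · intro hp
          exact this.1 ((parity_succ fl k.val).1 hp)
        · intro hp
          refine this.2 ?_
          rw [hmod] at hp ⊢
          intro hc
          exact hp ((parity_succ fl k.val).2 hc)

lemma sum_take_le (l : List ℕ) (j : ℕ) : (l.take j).sum ≤ l.sum := by
  conv_rhs => rw [← List.take_append_drop j l]
  rw [List.sum_append]
  omega

lemma sum_take_mono (l : List ℕ) {j j' : ℕ} (h : j ≤ j') : (l.take j).sum ≤ (l.take j').sum := by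
  have : l.take j = (l.take j').take j := by
    rw [List.take_take, Nat.min_eq_left h]
  rw [this]
  exact sum_take_le _ _

def psumb (m t : ℕ) (l : List ℕ) : Fin (t+1) → Fin (m+1) :=
  fun k => ⟨min ((l.take k.val).sum) m, Nat.lt_succ_of_le (Nat.min_le_right _ _)⟩

lemma psumb_val {m t : ℕ} {l : List ℕ} (hsum : l.sum = m) (k : Fin (t+1)) :
    (psumb m t l k).val = (l.take k.val).sum := by
  simp only [psumb]
  exact Nat.min_eq_left (le_trans (sum_take_le _ _) (le_of_eq hsum))

lemma psumb_mono (m t : ℕ) (l : List ℕ) : Monotone (psumb m t l) := by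
  intro j j' h
  simp only [psumb, Fin.mk_le_mk]
  exact min_le_min (sum_take_mono l h) le_rfl

lemma psumb_zero (m t : ℕ) (l : List ℕ) : psumb m t l 0 = 0 := by
  apply Fin.ext
  simp [psumb]

lemma psumb_last {m t : ℕ} {l : List ℕ} (hsum : l.sum = m) (hlen : l.length = t) :
    psumb m t l (Fin.last t) = Fin.last m := by
  apply Fin.ext
  rw [psumb_val hsum]
  show (l.take t).sum = m
  rw [← hlen, List.take_length, hsum]

lemma segPart_psumb {w : List Bool} {t : ℕ} {l : List ℕ}
    (hsum : l.sum = w.length) (hlen : l.length = t) (k : Fin t) :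
    segPart w (psumb w.length t l) k = seg l w k.val := by
  have hk : k.val < l.length := by rw [hlen]; exact k.isLt
  show (w.take ((psumb w.length t l k.succ).val)).drop ((psumb w.length t l k.castSucc).val)
      = seg l w k.val
  rw [psumb_val hsum, psumb_val hsum]
  show (w.take ((l.take (k.val + 1)).sum)).drop ((l.take k.val).sum) = seg l w k.val
  rw [List.drop_take, seg]
  congr 1
  rw [List.sum_take_succ l k.val hk, List.getD_eq_getElem l 0 hk]
  omega

lemma ofFn_getD {α : Type*} {n : ℕ} {l : List α} (d : α) (h : l.length = n) :
    List.ofFn (fun k : Fin n => l.getD k.val d) = l := by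
  apply List.ext_getElem
  · simp [h]
  · intro i h1 h2
    rw [List.getElem_ofFn]
    exact List.getD_eq_getElem l d h2

section bsec
variable {m t : ℕ} {b : Fin (t+1) → Fin (m+1)}

def deltaL (b : Fin (t+1) → Fin (m+1)) : List ℕ :=
  List.ofFn (fun k : Fin t => (b k.succ).val - (b k.castSucc).val)

lemma deltaL_length : (deltaL b).length = t := by simp [deltaL]

lemma deltaL_take_sum (hmono : Monotone b) (hb0 : b 0 = 0) :
    ∀ j, (hj : j ≤ t) → ((deltaL b).take j).sum = (b ⟨j, Nat.lt_succ_of_le hj⟩).val := by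
  intro j
  induction j with
  | zero =>
    intro hj
    have : (⟨0, Nat.lt_succ_of_le hj⟩ : Fin (t+1)) = 0 := rfl
    rw [this, hb0]
    simp
  | succ j ih =>
    intro hj
    have hjt : j < t := hj
    have hlt : j < (deltaL b).length := by rw [deltaL_length]; exact hjt
    rw [List.sum_take_succ _ j hlt, ih (le_of_lt hjt)]
    have he : (deltaL b)[j] = (b ⟨j+1, Nat.lt_succ_of_le hj⟩).val
        - (b ⟨j, Nat.lt_succ_of_le (le_of_lt hjt)⟩).val := by
      show (deltaL b)[j]'hlt = _
      simp only [deltaL]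
      rw [List.getElem_ofFn]
      rfl
    rw [he]
    have hle : b ⟨j, Nat.lt_succ_of_le (le_of_lt hjt)⟩ ≤ b ⟨j+1, Nat.lt_succ_of_le hj⟩ := by
      apply hmono
      simp [Fin.mk_le_mk]
    have := Fin.le_iff_val_le_val.1 hle
    omega

lemma deltaL_sum (hmono : Monotone b) (hb0 : b 0 = 0) (hlast : b (Fin.last t) = Fin.last m) :
    (deltaL b).sum = m := by
  have h1 := deltaL_take_sum hmono hb0 t le_rfl
  have h2 : (deltaL b).take t = deltaL b :=
    List.take_of_length_le (le_of_eq deltaL_length)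
  have h3 : (deltaL b).sum = ((deltaL b).take t).sum := (congrArg List.sum h2).symm
  rw [h3, h1]
  show (b (Fin.last t)).val = m
  rw [hlast]
  rfl

lemma psumb_deltaL (hmono : Monotone b) (hb0 : b 0 = 0)
    (hlast : b (Fin.last t) = Fin.last m) :
    psumb m t (deltaL b) = b := by
  funext k
  apply Fin.ext
  rw [psumb_val (deltaL_sum hmono hb0 hlast)]
  rw [deltaL_take_sum hmono hb0 k.val (Nat.lt_succ_iff.1 k.isLt)]

lemma deltaL_psumb {l : List ℕ} (hsum : l.sum = m) (hlen : l.length = t) :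
    deltaL (psumb m t l) = l := by
  apply List.ext_getElem
  · rw [deltaL_length, hlen]
  · intro i h1 h2
    rw [deltaL_length] at h1
    show (deltaL (psumb m t l))[i]'(by rw [deltaL_length]; exact h1) = l[i]
    simp only [deltaL]
    rw [List.getElem_ofFn]
    show (psumb m t l (Fin.succ ⟨i, h1⟩)).val - (psumb m t l (Fin.castSucc ⟨i, h1⟩)).val = l[i]
    rw [psumb_val hsum, psumb_val hsum]
    show (l.take (i+1)).sum - (l.take i).sum = l[i]
    rw [List.sum_take_succ l i h2]
    omega

end bsec

lemma cor_prod {B : List Bool → R} {w : List Bool} {t : ℕ} {L : List ℕ}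
    (hsum : L.sum = w.length) (hlen : L.length = t) :
    (∏ k : Fin t, if (k : ℕ) % 2 = 1 then B (segPart w (psumb w.length t L) k) else 1)
      = PB B false L w := by
  subst hlen
  rw [← prod_eq_PB L w false]
  refine Finset.prod_congr rfl fun k _ => ?_
  rw [segPart_psumb hsum rfl k]
  simp

lemma cor_flatten {w : List Bool} {t : ℕ} {L : List ℕ}
    (hsum : L.sum = w.length) (hlen : L.length = t) :
    (List.ofFn fun k : Fin t =>
        if (k : ℕ) % 2 = 1 then [true] else segPart w (psumb w.length t L) k).flatten
      = Ctr false L w := by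
  subst hlen
  rw [← flatten_eq_Ctr L w false]
  refine congrArg List.flatten (congrArg List.ofFn (funext fun k => ?_))
  rw [segPart_psumb hsum rfl k]
  simp

lemma cor_conds {w : List Bool} {t : ℕ} {L : List ℕ}
    (hsum : L.sum = w.length) (hlen : L.length = t) :
    (∀ k : Fin t,
        (((k : ℕ) % 2 = 1) → true ∈ segPart w (psumb w.length t L) k) ∧
        (((k : ℕ) % 2 = 0) → true ∉ segPart w (psumb w.length t L) k))
      ↔ Pok false L w := by
  subst hlen
  refine Iff.trans (forall_congr' fun k => ?_) (forall_eq_Pok L w false)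
  rw [segPart_psumb hsum rfl k]
  simp

lemma mCoeff_eq_sum' (B : List Bool → R) (u w : List Bool) {n : ℕ} (h : u.length = n) :
    mCoeff B u w = ∑ d ∈ CutF n w.length, Gval B u (List.ofFn d) w := by
  subst h; exact mCoeff_eq_sum B u w

lemma sigma_eq₁ {n₁ n₂ : ℕ} {f₁ : Fin n₁ → Bool} {f₂ : Fin n₂ → Bool}
    {d₁ : Fin n₁ → ℕ} {d₂ : Fin n₂ → ℕ}
    (hf : List.ofFn f₁ = List.ofFn f₂) (hd : List.ofFn d₁ = List.ofFn d₂) :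
    (⟨n₁, (f₁, d₁)⟩ : Σ n : ℕ, (Fin n → Bool) × (Fin n → ℕ)) = ⟨n₂, (f₂, d₂)⟩ := by
  have hn : n₁ = n₂ := by
    have := congrArg List.length hf
    simpa using this
  subst hn
  rw [List.ofFn_inj] at hf hd
  rw [hf, hd]

lemma sigma_eq₂ {m : ℕ} {r₁ r₂ : ℕ} (hr : r₁ = r₂)
    {b₁ : Fin (2*r₁+1+1) → Fin (m+1)} {b₂ : Fin (2*r₂+1+1) → Fin (m+1)}
    (hb : ∀ k : Fin (2*r₁+1+1), (b₁ k).val = (b₂ (Fin.cast (by rw [hr]) k)).val) :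
    (⟨r₁, b₁⟩ : Σ r : ℕ, (Fin (2*r+1+1) → Fin (m+1))) = ⟨r₂, b₂⟩ := by
  subst hr
  refine congrArg (Sigma.mk r₁) (funext fun k => Fin.ext ?_)
  simpa using hb k

lemma psumb_val_raw (m t : ℕ) (l : List ℕ) (k : Fin (t+1)) :
    (psumb m t l k).val = min ((l.take k.val).sum) m := rfl

def PhiF (w : List Bool) (u : List Bool) (dl : List ℕ) :
    Σ r : ℕ, Fin (2*r+1+1) → Fin (w.length+1) :=
  ⟨u.count true, psumb w.length (2*(u.count true)+1) (blL u dl)⟩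

def PsiF (l : List ℕ) : Σ n : ℕ, (Fin n → Bool) × (Fin n → ℕ) :=
  ⟨(ex false l).1.length, ((ex false l).1.get, fun k => (ex false l).2.getD k.val 0)⟩


end Stmt12Aux

open Stmt12Aux in
/-- Coefficient formula for substitution: if `A_{e₀ⁿ} = B_{e₀ⁿ} = 0` for `n ≥ 1` and
`B_∅ = 0`, then for any word `w` containing `e₁`,
`A(e₀,B)_w = ∑ (∏ᵢ B_{wᵢ}) A_{w/(wᵢ)ᵢ}`, the sum being over all `r ≥ 1` and all
factorizations `w = a₀ w₁ a₁ ⋯ a_{r-1} w_r a_r` (encoded by monotone cut points `b`,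
parts alternating `a₀, w₁, a₁, …, w_r, a_r`) in which each `aⱼ` is a (possibly empty)
power of `e₀` and each `wᵢ` contains at least one `e₁`, and where
`w/(wᵢ)ᵢ = a₀ e₁ a₁ ⋯ a_{r-1} e₁ a_r` is the contraction. -/
theorem stmt12 {R : Type*} [CommRing R] [Algebra ℚ R] (A B : List Bool → R)
    (hA : ∀ n, 1 ≤ n → A (List.replicate n false) = 0)
    (hB : ∀ n, 1 ≤ n → B (List.replicate n false) = 0)
    (hB0 : B [] = 0)
    (w : List Bool) (hw : true ∈ w) :
    substCoeff A B w =
      ∑ r ∈ Finset.Icc 1 w.length,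
        ∑ b ∈ Finset.univ.filter
            (fun b : Fin (2 * r + 1 + 1) → Fin (w.length + 1) =>
              Monotone b ∧ b 0 = 0 ∧ b (Fin.last (2 * r + 1)) = Fin.last w.length ∧
              ∀ k : Fin (2 * r + 1),
                (((k : ℕ) % 2 = 1) → true ∈ segPart w b k) ∧
                (((k : ℕ) % 2 = 0) → true ∉ segPart w b k)),
          (∏ k : Fin (2 * r + 1), if (k : ℕ) % 2 = 1 then B (segPart w b k) else 1) *
            A ((List.ofFn fun k : Fin (2 * r + 1) =>
                if (k : ℕ) % 2 = 1 then [true] else segPart w b k).flatten) := by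
  classical
  have lhs0 : substCoeff A B w = ∑ n ∈ Finset.range (w.length+1),
      ∑ p ∈ ((Finset.univ : Finset (Fin n → Bool)) ×ˢ CutF n w.length),
        A (List.ofFn p.1) * Gval B (List.ofFn p.1) (List.ofFn p.2) w := by
    rw [substCoeff]
    refine Finset.sum_congr rfl fun n _ => ?_
    rw [Finset.sum_product]
    refine Finset.sum_congr rfl fun f _ => ?_
    rw [mCoeff_eq_sum' B (List.ofFn f) w (List.length_ofFn (f := f)), Finset.mul_sum]
  have hfil : ∀ x ∈ (Finset.range (w.length+1)).sigma
      (fun n => (Finset.univ : Finset (Fin n → Bool)) ×ˢ CutF n w.length),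
      A (List.ofFn x.2.1) * Gval B (List.ofFn x.2.1) (List.ofFn x.2.2) w ≠ 0 →
        ok (List.ofFn x.2.1) (List.ofFn x.2.2) w := by
    rintro ⟨n, f, d⟩ hx hne
    have hd : d ∈ CutF n w.length :=
      (Finset.mem_product.1 (Finset.mem_sigma.1 hx).2).2
    have hsum : (List.ofFn d).sum = w.length := by
      rw [List.sum_ofFn]; exact mem_CutF.1 hd
    have hg : Gval B (List.ofFn f) (List.ofFn d) w ≠ 0 := fun h => hne (by
      show A (List.ofFn f) * Gval B (List.ofFn f) (List.ofFn d) w = 0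
      rw [h, mul_zero])
    exact ok_of_gval_ne hB hB0 _ _ _ hsum hg
  calc substCoeff A B w
      = ∑ n ∈ Finset.range (w.length+1),
          ∑ p ∈ ((Finset.univ : Finset (Fin n → Bool)) ×ˢ CutF n w.length),
            A (List.ofFn p.1) * Gval B (List.ofFn p.1) (List.ofFn p.2) w := lhs0
    _ = ∑ x ∈ (Finset.range (w.length+1)).sigma
          (fun n => (Finset.univ : Finset (Fin n → Bool)) ×ˢ CutF n w.length),
          A (List.ofFn x.2.1) * Gval B (List.ofFn x.2.1) (List.ofFn x.2.2) w :=
        Finset.sum_sigma' _ _ _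
    _ = ∑ x ∈ ((Finset.range (w.length+1)).sigma
          (fun n => (Finset.univ : Finset (Fin n → Bool)) ×ˢ CutF n w.length)).filter
            (fun x => ok (List.ofFn x.2.1) (List.ofFn x.2.2) w),
          A (List.ofFn x.2.1) * Gval B (List.ofFn x.2.1) (List.ofFn x.2.2) w :=
        (Finset.sum_filter_of_ne hfil).symm
    _ = ∑ y ∈ (Finset.Icc 1 w.length).sigma
          (fun r => Finset.univ.filter
            (fun b : Fin (2 * r + 1 + 1) → Fin (w.length + 1) =>
              Monotone b ∧ b 0 = 0 ∧ b (Fin.last (2 * r + 1)) = Fin.last w.length ∧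
              ∀ k : Fin (2 * r + 1),
                (((k : ℕ) % 2 = 1) → true ∈ segPart w b k) ∧
                (((k : ℕ) % 2 = 0) → true ∉ segPart w b k))),
          (∏ k : Fin (2 * y.1 + 1), if (k : ℕ) % 2 = 1 then B (segPart w y.2 k) else 1) *
            A ((List.ofFn fun k : Fin (2 * y.1 + 1) =>
                if (k : ℕ) % 2 = 1 then [true] else segPart w y.2 k).flatten) := by
        refine Finset.sum_nbij'
          (fun x => PhiF w (List.ofFn x.2.1) (List.ofFn x.2.2))
          (fun y => PsiF (deltaL y.2)) ?_ ?_ ?_ ?_ ?_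
        · -- forward membership
          rintro ⟨n, f, d⟩ hx
          dsimp only at hx ⊢
          rw [Finset.mem_filter] at hx
          obtain ⟨hmem, hok⟩ := hx
          obtain ⟨hlen_eq, hlen_le, hsum_eq, hcount_le, hiff⟩ :=
            ok_facts (List.ofFn f) (List.ofFn d) w hok
          have hLlen : (blL (List.ofFn f) (List.ofFn d)).length
              = 2*((List.ofFn f).count true)+1 := by
            rw [blL_eq, List.length_cons, bl_len _ _ hlen_eq]
          have hLsum : (blL (List.ofFn f) (List.ofFn d)).sum = w.length := by
            rw [blL_eq, List.sum_cons, bl_sum _ _ hlen_eq, hsum_eq]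
          have hr1 : 1 ≤ (List.ofFn f).count true :=
            List.count_pos_iff.2 (hiff.1 hw)
          refine Finset.mem_sigma.2 ⟨Finset.mem_Icc.2 ⟨hr1, hcount_le⟩,
            Finset.mem_filter.2 ⟨Finset.mem_univ _, psumb_mono _ _ _, psumb_zero _ _ _,
              psumb_last hLsum hLlen, (cor_conds hLsum hLlen).2
                (Pok_blL (List.ofFn f) (List.ofFn d) w hok)⟩⟩
        · -- backward membership
          rintro ⟨r, b⟩ hy
          dsimp only at hy ⊢
          obtain ⟨hr, hbf⟩ := Finset.mem_sigma.1 hy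
          dsimp only at hr hbf
          obtain ⟨-, hmono, hb0, hlast, hconds⟩ := Finset.mem_filter.1 hbf
          have hlsum : (deltaL b).sum = w.length := deltaL_sum hmono hb0 hlast
          have hllen : (deltaL b).length = 2*r+1 := deltaL_length
          have hbeq : b = psumb w.length (2*r+1) (deltaL b) :=
            (psumb_deltaL hmono hb0 hlast).symm
          have hpok : Pok false (deltaL b) w := by
            refine (cor_conds hlsum hllen).1 ?_
            rw [← hbeq]
            exact hconds
          have hok2 : ok (ex false (deltaL b)).1 (ex false (deltaL b)).2 w :=
            ok_ex (deltaL b) false w hlsum hpok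
          obtain ⟨hlen_eq, hlen_le, hsum_eq, _, _⟩ := ok_facts _ _ _ hok2
          refine Finset.mem_filter.2 ⟨Finset.mem_sigma.2
            ⟨Finset.mem_range.2 (Nat.lt_succ_of_le hlen_le),
              Finset.mem_product.2 ⟨Finset.mem_univ _, mem_CutF.2 ?_⟩⟩, ?_⟩
          · show (∑ i : Fin (ex false (deltaL b)).1.length,
                (ex false (deltaL b)).2.getD i.val 0) = w.length
            have hofn : List.ofFn (fun k : Fin (ex false (deltaL b)).1.length =>
                (ex false (deltaL b)).2.getD k.val 0) = (ex false (deltaL b)).2 :=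
              ofFn_getD 0 hlen_eq.symm
            have h5 := congrArg List.sum hofn
            rw [List.sum_ofFn] at h5
            rw [h5, hsum_eq]
          · show ok (List.ofFn (ex false (deltaL b)).1.get)
              (List.ofFn fun k : Fin (ex false (deltaL b)).1.length =>
                (ex false (deltaL b)).2.getD k.val 0) w
            rw [List.ofFn_get, ofFn_getD 0 hlen_eq.symm]
            exact hok2
        · -- left inverse
          rintro ⟨n, f, d⟩ hx
          dsimp only at hx ⊢
          rw [Finset.mem_filter] at hx
          obtain ⟨hmem, hok⟩ := hx
          obtain ⟨hlen_eq, hlen_le, hsum_eq, hcount_le, hiff⟩ :=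
            ok_facts (List.ofFn f) (List.ofFn d) w hok
          have hLlen : (blL (List.ofFn f) (List.ofFn d)).length
              = 2*((List.ofFn f).count true)+1 := by
            rw [blL_eq, List.length_cons, bl_len _ _ hlen_eq]
          have hLsum : (blL (List.ofFn f) (List.ofFn d)).sum = w.length := by
            rw [blL_eq, List.sum_cons, bl_sum _ _ hlen_eq, hsum_eq]
          have hex : ex false (blL (List.ofFn f) (List.ofFn d))
              = (List.ofFn f, List.ofFn d) := ex_blL _ _ w hok
          show PsiF (deltaL (psumb w.length (2*((List.ofFn f).count true)+1)
              (blL (List.ofFn f) (List.ofFn d)))) = ⟨n, (f, d)⟩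
          rw [deltaL_psumb hLsum hLlen]
          rw [PsiF, hex]
          exact sigma_eq₁ (by rw [List.ofFn_get]) (by rw [ofFn_getD 0 hlen_eq.symm])
        · -- right inverse
          rintro ⟨r, b⟩ hy
          dsimp only at hy ⊢
          obtain ⟨hr, hbf⟩ := Finset.mem_sigma.1 hy
          dsimp only at hr hbf
          obtain ⟨-, hmono, hb0, hlast, hconds⟩ := Finset.mem_filter.1 hbf
          have hlsum : (deltaL b).sum = w.length := deltaL_sum hmono hb0 hlast
          have hllen : (deltaL b).length = 2*r+1 := deltaL_length
          have hbeq : b = psumb w.length (2*r+1) (deltaL b) :=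
            (psumb_deltaL hmono hb0 hlast).symm
          have hpok : Pok false (deltaL b) w := by
            refine (cor_conds hlsum hllen).1 ?_
            rw [← hbeq]
            exact hconds
          have hok2 : ok (ex false (deltaL b)).1 (ex false (deltaL b)).2 w :=
            ok_ex (deltaL b) false w hlsum hpok
          obtain ⟨hlen_eq, hlen_le, hsum_eq, _, _⟩ := ok_facts _ _ _ hok2
          show PhiF w (List.ofFn (ex false (deltaL b)).1.get)
              (List.ofFn fun k : Fin (ex false (deltaL b)).1.length =>
                (ex false (deltaL b)).2.getD k.val 0) = ⟨r, b⟩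
          rw [List.ofFn_get, ofFn_getD 0 hlen_eq.symm]
          have hblL : blL (ex false (deltaL b)).1 (ex false (deltaL b)).2 = deltaL b :=
            blL_ex (deltaL b) ⟨r, by omega⟩
          have hrr : (ex false (deltaL b)).1.count true = r := by
            have h2 := bl_len (ex false (deltaL b)).1 (ex false (deltaL b)).2 hlen_eq
            have h3 := congrArg List.length hblL
            rw [blL_eq, List.length_cons, h2, hllen] at h3
            omega
          rw [PhiF]
          refine sigma_eq₂ hrr ?_
          intro k
          have h6 : ∀ j : Fin (2*r+1+1),
              (b j).val = min (((deltaL b).take j.val).sum) w.length := fun j =>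
            (congrArg Fin.val (congrFun hbeq j)).trans (psumb_val_raw _ _ _ j)
          rw [psumb_val_raw, hblL, h6, Fin.coe_cast]
        · -- summand equality
          rintro ⟨n, f, d⟩ hx
          dsimp only at hx ⊢
          rw [Finset.mem_filter] at hx
          obtain ⟨hmem, hok⟩ := hx
          obtain ⟨hlen_eq, hlen_le, hsum_eq, hcount_le, hiff⟩ :=
            ok_facts (List.ofFn f) (List.ofFn d) w hok
          have hLlen : (blL (List.ofFn f) (List.ofFn d)).length
              = 2*((List.ofFn f).count true)+1 := by
            rw [blL_eq, List.length_cons, bl_len _ _ hlen_eq]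
          have hLsum : (blL (List.ofFn f) (List.ofFn d)).sum = w.length := by
            rw [blL_eq, List.sum_cons, bl_sum _ _ hlen_eq, hsum_eq]
          show A (List.ofFn f) * Gval B (List.ofFn f) (List.ofFn d) w =
            (∏ k : Fin (2 * ((List.ofFn f).count true) + 1),
                if (k : ℕ) % 2 = 1 then
                  B (segPart w (psumb w.length (2*((List.ofFn f).count true)+1)
                      (blL (List.ofFn f) (List.ofFn d))) k)
                else 1) *
              A ((List.ofFn fun k : Fin (2 * ((List.ofFn f).count true) + 1) =>
                  if (k : ℕ) % 2 = 1 then [true]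
                  else segPart w (psumb w.length (2*((List.ofFn f).count true)+1)
                      (blL (List.ofFn f) (List.ofFn d))) k).flatten)
          rw [cor_prod hLsum hLlen, cor_flatten hLsum hLlen,
            PB_blL _ _ _ hok, Ctr_blL _ _ _ hok]
          rw [mul_comm]
    _ = ∑ r ∈ Finset.Icc 1 w.length,
        ∑ b ∈ Finset.univ.filter
            (fun b : Fin (2 * r + 1 + 1) → Fin (w.length + 1) =>
              Monotone b ∧ b 0 = 0 ∧ b (Fin.last (2 * r + 1)) = Fin.last w.length ∧
              ∀ k : Fin (2 * r + 1),
                (((k : ℕ) % 2 = 1) → true ∈ segPart w b k) ∧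
                (((k : ℕ) % 2 = 0) → true ∉ segPart w b k)),
          (∏ k : Fin (2 * r + 1), if (k : ℕ) % 2 = 1 then B (segPart w b k) else 1) *
            A ((List.ofFn fun k : Fin (2 * r + 1) =>
                if (k : ℕ) % 2 = 1 then [true] else segPart w b k).flatten) :=
        (Finset.sum_sigma' (Finset.Icc 1 w.length)
          (fun r => Finset.univ.filter
            (fun b : Fin (2 * r + 1 + 1) → Fin (w.length + 1) =>
              Monotone b ∧ b 0 = 0 ∧ b (Fin.last (2 * r + 1)) = Fin.last w.length ∧
              ∀ k : Fin (2 * r + 1),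
                (((k : ℕ) % 2 = 1) → true ∈ segPart w b k) ∧
                (((k : ℕ) % 2 = 0) → true ∉ segPart w b k)))
          (fun r b =>
            (∏ k : Fin (2 * r + 1), if (k : ℕ) % 2 = 1 then B (segPart w b k) else 1) *
            A ((List.ofFn fun k : Fin (2 * r + 1) =>
                if (k : ℕ) % 2 = 1 then [true] else segPart w b k).flatten))).symm
end

section
/- Let $R$ be a commutative $\mathbb{Q}$-algebra, $A \in R\langle\langle e_0,e_1\rangle\rangle$ group-like (satisfying the shuffle relations with constant term 1) and $B \in R\langle\langle e_0,e_1\rangle\rangle$ primitive (i.e. $B$ is a Lie-like element: its coefficients vanish on all nontrivial shuffle products and on the empty word). Then the substitution $A(e_0,B)$ (replacing $e_1$ by $B$ in $A$) is group-like, and $A(e_0,B)^{-1} = A^{-1}(e_0,B)$. -/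
/-- The list of all shuffles of two words (with multiplicity). -/
def shuffles {α : Type*} : List α → List α → List (List α)
  | [], ys => [ys]
  | x :: xs, [] => [x :: xs]
  | x :: xs, y :: ys =>
      ((shuffles xs (y :: ys)).map (x :: ·)) ++ ((shuffles (x :: xs) ys).map (y :: ·))
termination_by xs ys => xs.length + ys.length

/-- Convolution (concatenation) product of noncommutative series on `{e₀, e₁}`. -/
def ncMul {R : Type*} [CommRing R] (P Q : List Bool → R) : List Bool → R :=
  fun w => ∑ i ∈ Finset.range (w.length + 1), P (w.take i) * Q (w.drop i)

/-- Group-like: constant coefficient `1` and the shuffle relations hold. -/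
def IsGroupLike {R : Type*} [CommRing R] (P : List Bool → R) : Prop :=
  P [] = 1 ∧ ∀ u v : List Bool, P u * P v = ((shuffles u v).map P).sum

/-- Primitive (Lie-like): zero constant coefficient, and the coefficients vanish on
all nontrivial shuffle products: `∑_{w ∈ u ш v} B_w = 0` for `u, v` nonempty. -/
def IsPrimitive {R : Type*} [CommRing R] (B : List Bool → R) : Prop :=
  B [] = 0 ∧ ∀ u v : List Bool, u ≠ [] → v ≠ [] → ((shuffles u v).map B).sum = 0

section A
variable {R : Type*} [CommRing R]

def delta : List Bool → R := fun w => if w = [] then 1 else 0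

def E0 : List Bool → R := fun w => if w = [false] then 1 else 0

@[simp] lemma delta_nil : (delta : List Bool → R) [] = 1 := rfl
@[simp] lemma delta_of_ne {w : List Bool} (h : w ≠ []) : (delta : List Bool → R) w = 0 := by
  simp [delta, h]

lemma ncMul_delta_left (P : List Bool → R) (w : List Bool) : ncMul delta P w = P w := by
  unfold ncMul
  rw [Finset.sum_range_succ']
  have h : ∀ i ∈ Finset.range w.length, delta (w.take (i+1)) * P (w.drop (i+1)) = 0 := by
    intro i hi
    simp only [Finset.mem_range] at hi
    have hw : w ≠ [] := by rintro rfl; simp at hi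
    have : w.take (i+1) ≠ [] := by
      simp [List.take_eq_nil_iff, hw]
    simp [this]
  rw [Finset.sum_congr rfl h]
  simp

lemma ncMul_delta_right (P : List Bool → R) (w : List Bool) : ncMul P delta w = P w := by
  unfold ncMul
  rw [Finset.sum_range_succ]
  have h : ∀ i ∈ Finset.range w.length, P (w.take i) * delta (w.drop i) = 0 := by
    intro i hi
    simp only [Finset.mem_range] at hi
    have : w.drop i ≠ [] := by
      simp [List.drop_eq_nil_iff]; omega
    simp [this]
  rw [Finset.sum_congr rfl h]
  simp

lemma ncMul_assoc (P Q S : List Bool → R) (w : List Bool) :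
    ncMul (ncMul P Q) S w = ncMul P (ncMul Q S) w := by
  unfold ncMul
  have hL : ∀ k ∈ Finset.range (w.length + 1),
      (∑ i ∈ Finset.range ((w.take k).length + 1), P ((w.take k).take i) * Q ((w.take k).drop i))
        * S (w.drop k)
      = ∑ i ∈ Finset.range (k + 1), P (w.take i) * (Q ((w.drop i).take (k - i)) * S (w.drop k)) := by
    intro k hk
    simp only [Finset.mem_range] at hk
    rw [List.length_take, min_eq_left (by omega), Finset.sum_mul]
    refine Finset.sum_congr rfl fun i hi => ?_
    simp only [Finset.mem_range] at hi
    rw [List.take_take, min_eq_left (by omega), List.drop_take, mul_assoc]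
  rw [Finset.sum_congr rfl hL]
  rw [Finset.sum_sigma']
  have hR : ∀ i ∈ Finset.range (w.length + 1),
      P (w.take i) * (∑ j ∈ Finset.range ((w.drop i).length + 1), Q ((w.drop i).take j) * S ((w.drop i).drop j))
      = ∑ k ∈ Finset.Ico i (w.length + 1), P (w.take i) * (Q ((w.drop i).take (k - i)) * S (w.drop k)) := by
    intro i hi
    simp only [Finset.mem_range] at hi
    rw [Finset.mul_sum, List.length_drop, Finset.sum_Ico_eq_sum_range]
    have : w.length + 1 - i = w.length - i + 1 := by omega
    rw [this]
    refine Finset.sum_congr rfl fun j hj => ?_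
    simp only [Finset.mem_range] at hj
    rw [List.drop_drop, show i + j - i = j by omega]
  rw [Finset.sum_congr rfl hR, Finset.sum_sigma']
  apply Finset.sum_nbij' (fun x => ⟨x.2, x.1⟩ : (Σ _ : ℕ, ℕ) → (Σ _ : ℕ, ℕ)) (fun x => ⟨x.2, x.1⟩)
  · intro a ha
    simp only [Finset.mem_sigma, Finset.mem_range, Finset.mem_Ico] at ha ⊢
    omega
  · intro a ha
    simp only [Finset.mem_sigma, Finset.mem_range, Finset.mem_Ico] at ha ⊢
    omega
  · intro a _; rfl
  · intro a _; rfl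
  · intro a _; rfl

end A

section B
variable {R : Type*} [CommRing R] (B : List Bool → R)

@[simp] lemma mCoeff_nil (w : List Bool) : mCoeff B [] w = delta w := rfl

@[simp] lemma mCoeff_true (u w : List Bool) :
    mCoeff B (true :: u) w = ncMul B (mCoeff B u) w := rfl

@[simp] lemma mCoeff_false_nil (u : List Bool) : mCoeff B (false :: u) [] = 0 := rfl
@[simp] lemma mCoeff_false_true (u w : List Bool) : mCoeff B (false :: u) (true :: w) = 0 := rfl
@[simp] lemma mCoeff_false_false (u w : List Bool) :
    mCoeff B (false :: u) (false :: w) = mCoeff B u w := rfl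

lemma ncMul_E0_nil (P : List Bool → R) : ncMul E0 P [] = 0 := by
  simp [ncMul, E0]

lemma ncMul_E0_true (P : List Bool → R) (w : List Bool) : ncMul E0 P (true :: w) = 0 := by
  unfold ncMul
  apply Finset.sum_eq_zero
  intro i _
  rcases i with _ | i <;> simp [E0]

lemma ncMul_E0_false (P : List Bool → R) (w : List Bool) : ncMul E0 P (false :: w) = P w := by
  unfold ncMul
  rw [Finset.sum_range_succ']
  simp only [List.take_succ_cons, List.drop_succ_cons, List.take_zero, List.drop_zero,
    List.length_cons]
  rw [Finset.sum_range_succ']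
  have h1 : ∀ i ∈ Finset.range w.length,
      E0 (false :: w.take (i+1)) * P (w.drop (i+1)) = 0 := by
    intro i hi
    simp only [Finset.mem_range] at hi
    have hw : w ≠ [] := by rintro rfl; simp at hi
    have h2 : w.take (i+1) ≠ [] := by simp [List.take_eq_nil_iff, hw]
    have h3 : (false :: w.take (i+1)) ≠ [false] := by simpa using h2
    simp [E0, h3]
  rw [Finset.sum_congr rfl h1]
  simp [E0]

lemma mCoeff_false (u : List Bool) (w : List Bool) :
    mCoeff B (false :: u) w = ncMul E0 (mCoeff B u) w := by
  match w with
  | [] => rw [mCoeff_false_nil, ncMul_E0_nil]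
  | true :: w' => rw [mCoeff_false_true, ncMul_E0_true]
  | false :: w' => rw [mCoeff_false_false, ncMul_E0_false]

end B

section C
variable {R : Type*} [CommRing R] (B : List Bool → R)

lemma ncMul_congr {P P' Q Q' : List Bool → R} (hP : ∀ w, P w = P' w) (hQ : ∀ w, Q w = Q' w)
    (w : List Bool) : ncMul P Q w = ncMul P' Q' w := by
  unfold ncMul; exact Finset.sum_congr rfl fun i _ => by rw [hP, hQ]

lemma mCoeff_append (s t w : List Bool) :
    mCoeff B (s ++ t) w = ncMul (mCoeff B s) (mCoeff B t) w := by
  induction s generalizing w with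
  | nil =>
    rw [List.nil_append, (ncMul_delta_left (mCoeff B t) w).symm]
    exact ncMul_congr (fun w => (mCoeff_nil B w).symm) (fun _ => rfl) w
  | cons c s ih =>
    cases c with
    | true =>
      rw [List.cons_append, mCoeff_true]
      have h2 : ncMul (mCoeff B (true :: s)) (mCoeff B t) w
          = ncMul (ncMul B (mCoeff B s)) (mCoeff B t) w :=
        ncMul_congr (fun w' => mCoeff_true B s w') (fun _ => rfl) w
      rw [h2, ncMul_assoc]
      exact ncMul_congr (fun _ => rfl) (fun w'' => ih w'') w
    | false =>
      rw [List.cons_append, mCoeff_false]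
      have h2 : ncMul (mCoeff B (false :: s)) (mCoeff B t) w
          = ncMul (ncMul E0 (mCoeff B s)) (mCoeff B t) w :=
        ncMul_congr (fun w' => mCoeff_false B s w') (fun _ => rfl) w
      rw [h2, ncMul_assoc]
      exact ncMul_congr (fun _ => rfl) (fun w'' => ih w'') w

lemma mCoeff_eq_zero (hB0 : B [] = 0) :
    ∀ (s w : List Bool), w.length < s.length → mCoeff B s w = 0 := by
  intro s
  induction s with
  | nil => intro w h; simp at h
  | cons c s ih =>
    intro w h
    cases c with
    | false =>
      match w with
      | [] => rfl
      | true :: w' => rfl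
      | false :: w' =>
        rw [mCoeff_false_false]
        exact ih w' (by simpa using h)
    | true =>
      rw [mCoeff_true]
      unfold ncMul
      rw [Finset.sum_range_succ']
      have h1 : ∀ i ∈ Finset.range w.length,
          B (w.take (i+1)) * mCoeff B s (w.drop (i+1)) = 0 := by
        intro i hi
        simp only [Finset.mem_range] at hi
        have : (w.drop (i+1)).length < s.length := by
          rw [List.length_drop]
          simp only [List.length_cons] at h
          omega
        rw [ih _ this, mul_zero]
      rw [Finset.sum_congr rfl h1]
      simp [hB0]

end C

section D

@[simp] lemma shuffles_nil_left {α : Type*} (v : List α) : shuffles [] v = [v] := by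
  rw [shuffles]

@[simp] lemma shuffles_nil_right {α : Type*} (u : List α) : shuffles u [] = [u] := by
  cases u <;> rw [shuffles]

lemma shuffles_cons_cons {α : Type*} (x y : α) (u v : List α) :
    shuffles (x :: u) (y :: v) =
      ((shuffles u (y :: v)).map (x :: ·)) ++ ((shuffles (x :: u) v).map (y :: ·)) := by
  rw [shuffles]

theorem length_of_mem_shuffles {α : Type*} :
    ∀ (u v : List α), ∀ w ∈ shuffles u v, w.length = u.length + v.length
  | [], v => by simp
  | x :: u, [] => by simp
  | x :: u, y :: v => by
    intro w hw
    rw [shuffles_cons_cons] at hw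
    simp only [List.mem_append, List.mem_map] at hw
    rcases hw with ⟨w', hw', rfl⟩ | ⟨w', hw', rfl⟩
    · have := length_of_mem_shuffles u (y :: v) w' hw'
      simp only [List.length_cons] at this ⊢
      omega
    · have := length_of_mem_shuffles (x :: u) v w' hw'
      simp only [List.length_cons] at this ⊢
      omega
termination_by u v => u.length + v.length

end D

section E
variable {R : Type*} [CommRing R]

def shSum (P : List Bool → R) (u v : List Bool) : R := ((shuffles u v).map P).sum

lemma shSum_congr {P Q : List Bool → R} (h : ∀ w, P w = Q w) (u v : List Bool) :
    shSum P u v = shSum Q u v := by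
  unfold shSum
  congr 1
  exact List.map_congr_left fun w _ => h w

lemma list_sum_map_add {α : Type*} (l : List α) (f g : α → R) :
    (l.map (fun x => f x + g x)).sum = (l.map f).sum + (l.map g).sum := by
  induction l with
  | nil => simp
  | cons a l ih => simp [ih]; ring

lemma list_sum_map_mul_left {α : Type*} (l : List α) (c : R) (f : α → R) :
    (l.map (fun x => c * f x)).sum = c * (l.map f).sum := by
  induction l with
  | nil => simp
  | cons a l ih => simp [ih]; ring

lemma list_sum_map_mul_right {α : Type*} (l : List α) (c : R) (f : α → R) :
    (l.map (fun x => f x * c)).sum = (l.map f).sum * c := by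
  induction l with
  | nil => simp
  | cons a l ih => simp [ih]; ring

lemma sum_comm_list {α ι : Type*} (l : List α) (t : Finset ι) (f : ι → α → R) :
    ∑ i ∈ t, (l.map (f i)).sum = (l.map (fun x => ∑ i ∈ t, f i x)).sum := by
  induction l with
  | nil => simp
  | cons a l ih => simp [Finset.sum_add_distrib, ih]

@[simp] lemma shSum_nil_left (P : List Bool → R) (v : List Bool) : shSum P [] v = P v := by
  simp [shSum]

@[simp] lemma shSum_nil_right (P : List Bool → R) (u : List Bool) : shSum P u [] = P u := by
  simp [shSum]

lemma shSum_cons_cons (P : List Bool → R) (x y : Bool) (u v : List Bool) :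
    shSum P (x :: u) (y :: v) =
      shSum (fun t => P (x :: t)) u (y :: v) + shSum (fun t => P (y :: t)) (x :: u) v := by
  unfold shSum
  rw [shuffles_cons_cons, List.map_append, List.sum_append, List.map_map, List.map_map]
  rfl

lemma ncMul_cons (P Q : List Bool → R) (a : Bool) (w : List Bool) :
    ncMul P Q (a :: w) = P [] * Q (a :: w) + ncMul (fun t => P (a :: t)) Q w := by
  unfold ncMul
  rw [show (a :: w).length = w.length + 1 from rfl, Finset.sum_range_succ']
  simp only [List.take_succ_cons, List.drop_succ_cons, List.take_zero, List.drop_zero]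
  ring

theorem shSum_ncMul :
    ∀ (u v : List Bool) (P Q : List Bool → R),
      shSum (ncMul P Q) u v =
        ∑ i ∈ Finset.range (u.length + 1), ∑ j ∈ Finset.range (v.length + 1),
          shSum P (u.take i) (v.take j) * shSum Q (u.drop i) (v.drop j)
  | [], v, P, Q => by
    simp [ncMul]
  | x :: u', [], P, Q => by
    simp [ncMul]
  | x :: u', y :: v', P, Q => by
    have IH1 := shSum_ncMul u' (y :: v') (fun t => P (x :: t)) Q
    have IH2 := shSum_ncMul (x :: u') v' (fun t => P (y :: t)) Q
    -- LHS decomposition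
    rw [shSum_cons_cons]
    have e1 : shSum (fun t => ncMul P Q (x :: t)) u' (y :: v')
        = P [] * shSum (fun t => Q (x :: t)) u' (y :: v')
          + shSum (ncMul (fun t => P (x :: t)) Q) u' (y :: v') := by
      rw [shSum_congr (fun w => ncMul_cons P Q x w) u' (y :: v')]
      unfold shSum
      rw [list_sum_map_add, list_sum_map_mul_left]
    have e2 : shSum (fun t => ncMul P Q (y :: t)) (x :: u') v'
        = P [] * shSum (fun t => Q (y :: t)) (x :: u') v'
          + shSum (ncMul (fun t => P (y :: t)) Q) (x :: u') v' := by
      rw [shSum_congr (fun w => ncMul_cons P Q y w) (x :: u') v']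
      unfold shSum
      rw [list_sum_map_add, list_sum_map_mul_left]
    rw [e1, e2, IH1, IH2]
    have eQ : shSum (fun t => Q (x :: t)) u' (y :: v') + shSum (fun t => Q (y :: t)) (x :: u') v'
        = shSum Q (x :: u') (y :: v') := (shSum_cons_cons Q x y u' v').symm
    -- Now expand the RHS
    rw [show (x :: u').length = u'.length + 1 from rfl,
        show (y :: v').length = v'.length + 1 from rfl]
    rw [Finset.sum_range_succ' (fun i => ∑ j ∈ Finset.range (v'.length + 1 + 1),
          shSum P ((x :: u').take i) ((y :: v').take j)
            * shSum Q ((x :: u').drop i) ((y :: v').drop j)) (u'.length + 1)]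
    simp only [List.take_succ_cons, List.drop_succ_cons, List.take_zero, List.drop_zero]
    have hRHS2 : ∑ j ∈ Finset.range (v'.length + 1 + 1),
        shSum P [] ((y :: v').take j) * shSum Q (x :: u') ((y :: v').drop j)
        = (∑ j ∈ Finset.range (v'.length + 1),
            P (y :: v'.take j) * shSum Q (x :: u') (v'.drop j))
          + P [] * shSum Q (x :: u') (y :: v') := by
      rw [Finset.sum_range_succ' (fun j => shSum P [] ((y :: v').take j)
            * shSum Q (x :: u') ((y :: v').drop j)) (v'.length + 1)]
      simp only [List.take_succ_cons, List.drop_succ_cons, List.take_zero, List.drop_zero,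
        shSum_nil_left]
    have hT2 : ∑ i ∈ Finset.range (u'.length + 1 + 1), ∑ j ∈ Finset.range (v'.length + 1),
          shSum (fun t => P (y :: t)) ((x :: u').take i) (v'.take j)
            * shSum Q ((x :: u').drop i) (v'.drop j)
        = (∑ i ∈ Finset.range (u'.length + 1), ∑ j ∈ Finset.range (v'.length + 1),
            shSum (fun t => P (y :: t)) (x :: u'.take i) (v'.take j)
              * shSum Q (u'.drop i) (v'.drop j))
          + ∑ j ∈ Finset.range (v'.length + 1),
              P (y :: v'.take j) * shSum Q (x :: u') (v'.drop j) := by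
      rw [Finset.sum_range_succ' (fun i => ∑ j ∈ Finset.range (v'.length + 1),
            shSum (fun t => P (y :: t)) ((x :: u').take i) (v'.take j)
              * shSum Q ((x :: u').drop i) (v'.drop j)) (u'.length + 1)]
      simp only [List.take_succ_cons, List.drop_succ_cons, List.take_zero, List.drop_zero,
        shSum_nil_left]
    have hT1 : ∑ i ∈ Finset.range (u'.length + 1), ∑ j ∈ Finset.range (v'.length + 1 + 1),
          shSum (fun t => P (x :: t)) (u'.take i) ((y :: v').take j)
            * shSum Q (u'.drop i) ((y :: v').drop j)
        = (∑ i ∈ Finset.range (u'.length + 1), ∑ j ∈ Finset.range (v'.length + 1),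
            shSum (fun t => P (x :: t)) (u'.take i) (y :: v'.take j)
              * shSum Q (u'.drop i) (v'.drop j))
          + ∑ i ∈ Finset.range (u'.length + 1),
              P (x :: u'.take i) * shSum Q (u'.drop i) (y :: v') := by
      rw [← Finset.sum_add_distrib]
      refine Finset.sum_congr rfl fun i _ => ?_
      rw [Finset.sum_range_succ' (fun j => shSum (fun t => P (x :: t)) (u'.take i)
            ((y :: v').take j) * shSum Q (u'.drop i) ((y :: v').drop j)) (v'.length + 1)]
      simp only [List.take_succ_cons, List.drop_succ_cons, List.take_zero, List.drop_zero,
        shSum_nil_right]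
    have hRHS1 : ∑ i ∈ Finset.range (u'.length + 1), ∑ j ∈ Finset.range (v'.length + 1 + 1),
          shSum P (x :: u'.take i) ((y :: v').take j) * shSum Q (u'.drop i) ((y :: v').drop j)
        = ((∑ i ∈ Finset.range (u'.length + 1), ∑ j ∈ Finset.range (v'.length + 1),
            shSum (fun t => P (x :: t)) (u'.take i) (y :: v'.take j)
              * shSum Q (u'.drop i) (v'.drop j))
          + ∑ i ∈ Finset.range (u'.length + 1), ∑ j ∈ Finset.range (v'.length + 1),
            shSum (fun t => P (y :: t)) (x :: u'.take i) (v'.take j)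
              * shSum Q (u'.drop i) (v'.drop j))
          + ∑ i ∈ Finset.range (u'.length + 1),
              P (x :: u'.take i) * shSum Q (u'.drop i) (y :: v') := by
      rw [← Finset.sum_add_distrib, ← Finset.sum_add_distrib]
      refine Finset.sum_congr rfl fun i _ => ?_
      rw [Finset.sum_range_succ' (fun j => shSum P (x :: u'.take i) ((y :: v').take j)
            * shSum Q (u'.drop i) ((y :: v').drop j)) (v'.length + 1)]
      simp only [List.take_succ_cons, List.drop_succ_cons, List.take_zero, List.drop_zero,
        shSum_nil_right]
      congr 1
      rw [← Finset.sum_add_distrib]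
      refine Finset.sum_congr rfl fun j _ => ?_
      rw [shSum_cons_cons, add_mul]
    rw [hRHS1, hRHS2, hT1, hT2]
    linear_combination (P []) * eQ
termination_by u v => u.length + v.length
end E

section F

def desh {α : Type*} : List α → List (List α × List α)
  | [] => [([], [])]
  | x :: s => ((desh s).map (fun p => (x :: p.1, p.2))) ++ ((desh s).map (fun p => (p.1, x :: p.2)))

/-- Our own count function, to avoid `BEq` instance mismatches. -/
def cnt {β : Type*} [DecidableEq β] (x : β) : List β → ℕ
  | [] => 0
  | y :: l => cnt x l + if y = x then 1 else 0

variable {α : Type*} [DecidableEq α]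

@[simp] lemma cnt_nil {β : Type*} [DecidableEq β] (x : β) : cnt x [] = 0 := rfl

@[simp] lemma cnt_cons {β : Type*} [DecidableEq β] (x y : β) (l : List β) :
    cnt x (y :: l) = cnt x l + if y = x then 1 else 0 := rfl

@[simp] lemma cnt_append {β : Type*} [DecidableEq β] (x : β) (l l' : List β) :
    cnt x (l ++ l') = cnt x l + cnt x l' := by
  induction l with
  | nil => simp
  | cons y l ih => simp [ih]; omega

lemma cnt_eq_zero {β : Type*} [DecidableEq β] {x : β} {l : List β} (h : x ∉ l) :
    cnt x l = 0 := by
  induction l with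
  | nil => rfl
  | cons y l ih =>
    simp only [List.mem_cons, not_or] at h
    simp [ih h.2, Ne.symm h.1]

lemma cnt_map_inj {β γ : Type*} [DecidableEq β] [DecidableEq γ] (l : List β) (f : β → γ)
    (hf : Function.Injective f) (x : β) : cnt (f x) (l.map f) = cnt x l := by
  induction l with
  | nil => rfl
  | cons b l ih =>
    simp only [List.map_cons, cnt_cons, ih]
    congr 1
    by_cases h : b = x
    · subst h; simp
    · have h2 : ¬ (f b = f x) := fun hc => h (hf hc)
      simp [h, h2]

lemma cnt_map_not_mem {β γ : Type*} [DecidableEq β] [DecidableEq γ] (l : List β) (f : β → γ)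
    {y : γ} (hy : ∀ b, f b ≠ y) : cnt y (l.map f) = 0 := by
  apply cnt_eq_zero
  intro h
  rcases List.mem_map.mp h with ⟨b, _, hb⟩
  exact hy b hb

lemma cntL_nil (x : α) (l : List (List α × List α)) (s2 : List α) :
    cnt (([] : List α), s2) (l.map (fun p => (x :: p.1, p.2))) = 0 :=
  cnt_map_not_mem _ _ (fun p => by simp)

lemma cntL_cons (x a : α) (l : List (List α × List α)) (t1 s2 : List α) :
    cnt ((a :: t1), s2) (l.map (fun p => (x :: p.1, p.2)))
      = if a = x then cnt (t1, s2) l else 0 := by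
  by_cases h : a = x
  · subst h
    rw [if_pos rfl]
    simpa using cnt_map_inj l (fun p : List α × List α => (a :: p.1, p.2))
      (fun p q hpq => by
        simp only [Prod.mk.injEq, List.cons.injEq] at hpq
        exact Prod.ext hpq.1.2 hpq.2) (t1, s2)
  · rw [if_neg h]
    exact cnt_map_not_mem _ _ (fun p => by simp [Ne.symm h])

lemma cntR_nil (x : α) (l : List (List α × List α)) (s1 : List α) :
    cnt (s1, ([] : List α)) (l.map (fun p => (p.1, x :: p.2))) = 0 :=
  cnt_map_not_mem _ _ (fun p => by simp)

lemma cntR_cons (x b : α) (l : List (List α × List α)) (s1 t2 : List α) :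
    cnt (s1, (b :: t2)) (l.map (fun p => (p.1, x :: p.2)))
      = if b = x then cnt (s1, t2) l else 0 := by
  by_cases h : b = x
  · subst h
    rw [if_pos rfl]
    simpa using cnt_map_inj l (fun p : List α × List α => (p.1, b :: p.2))
      (fun p q hpq => by
        simp only [Prod.mk.injEq, List.cons.injEq] at hpq
        exact Prod.ext hpq.1 hpq.2.2) (s1, t2)
  · rw [if_neg h]
    exact cnt_map_not_mem _ _ (fun p => by simp [Ne.symm h])

lemma cntW_nil (x : α) (l : List (List α)) : cnt ([] : List α) (l.map (x :: ·)) = 0 :=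
  cnt_map_not_mem _ _ (fun w => by simp)

lemma cntW_cons (x a : α) (l : List (List α)) (w : List α) :
    cnt (a :: w) (l.map (x :: ·)) = if a = x then cnt w l else 0 := by
  by_cases h : a = x
  · subst h
    rw [if_pos rfl]
    simpa using cnt_map_inj l (a :: ·) (fun p q hpq => by simpa using hpq) w
  · rw [if_neg h]
    exact cnt_map_not_mem _ _ (fun w' => by simp [Ne.symm h])

theorem cnt_desh : ∀ (s s1 s2 : List α), cnt (s1, s2) (desh s) = cnt s (shuffles s1 s2) := by
  intro s
  induction s with
  | nil =>
    intro s1 s2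
    match s1, s2 with
    | [], [] => simp [desh]
    | [], b :: t2 => simp [desh]
    | a :: t1, [] => simp [desh]
    | a :: t1, b :: t2 =>
      rw [shuffles_cons_cons, cnt_append, cntW_nil, cntW_nil]
      simp [desh]
  | cons x s ih =>
    intro s1 s2
    rw [show desh (x :: s) = ((desh s).map (fun p => (x :: p.1, p.2)))
          ++ ((desh s).map (fun p => (p.1, x :: p.2))) from rfl, cnt_append]
    match s1, s2 with
    | [], [] =>
      rw [cntL_nil, cntR_nil]
      simp
    | [], b :: t2 =>
      rw [cntL_nil, cntR_cons, shuffles_nil_left]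
      by_cases h : b = x
      · subst h
        rw [if_pos rfl, ih [] t2, shuffles_nil_left]
        simp
      · rw [if_neg h]
        simp [h]
    | a :: t1, [] =>
      rw [cntR_nil, cntL_cons, shuffles_nil_right]
      by_cases h : a = x
      · subst h
        rw [if_pos rfl, ih t1 [], shuffles_nil_right]
        simp
      · rw [if_neg h]
        simp [h]
    | a :: t1, b :: t2 =>
      rw [cntL_cons, cntR_cons, shuffles_cons_cons, cnt_append, cntW_cons, cntW_cons,
        ih t1 (b :: t2), ih (a :: t1) t2]
      congr 1 <;> exact if_congr eq_comm rfl rfl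

omit [DecidableEq α] in
lemma desh_lengths : ∀ (s : List α), ∀ p ∈ desh s, p.1.length + p.2.length = s.length := by
  intro s
  induction s with
  | nil => intro p hp; simp [desh] at hp; simp [hp]
  | cons x s ih =>
    intro p hp
    rw [show desh (x :: s) = ((desh s).map (fun p => (x :: p.1, p.2)))
          ++ ((desh s).map (fun p => (p.1, x :: p.2))) from rfl] at hp
    simp only [List.mem_append, List.mem_map] at hp
    rcases hp with ⟨q, hq, rfl⟩ | ⟨q, hq, rfl⟩ <;>
      · have := ih q hq
        simp only [List.length_cons] at *
        omega

end F

section G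
variable {R : Type*} [CommRing R]

lemma list_sum_map_cnt {β : Type*} [DecidableEq β] (l : List β) (g : β → R) (T : Finset β)
    (hT : ∀ x ∈ l, x ∈ T) : (l.map g).sum = ∑ x ∈ T, (cnt x l : R) * g x := by
  induction l with
  | nil => simp
  | cons a l ih =>
    simp only [List.map_cons, List.sum_cons]
    rw [ih (fun x hx => hT x (List.mem_cons_of_mem a hx))]
    have : ∀ x ∈ T, (cnt x (a :: l) : R) * g x
        = (cnt x l : R) * g x + (if a = x then g x else 0) := by
      intro x _
      rw [cnt_cons]
      push_cast
      by_cases h : a = x <;> simp [h] <;> ring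
    rw [Finset.sum_congr rfl this, Finset.sum_add_distrib, Finset.sum_ite_eq T a g,
      if_pos (hT a List.mem_cons_self)]
    ring

end G

section H
variable {R : Type*} [CommRing R]

def words (N : ℕ) : Finset (List Bool) :=
  (Finset.range (N + 1)).biUnion
    (fun n => Finset.univ.image (fun f : Fin n → Bool => List.ofFn f))

lemma mem_words {s : List Bool} {N : ℕ} : s ∈ words N ↔ s.length ≤ N := by
  simp only [words, Finset.mem_biUnion, Finset.mem_range, Finset.mem_image, Finset.mem_univ,
    true_and]
  constructor
  · rintro ⟨n, hn, f, rfl⟩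
    simp only [List.length_ofFn]
    omega
  · intro h
    exact ⟨s.length, by omega, s.get, List.ofFn_get s⟩

lemma substCoeff_eq (A B : List Bool → R) (w : List Bool) :
    substCoeff A B w = ∑ s ∈ words w.length, A s * mCoeff B s w := by
  unfold substCoeff words
  rw [Finset.sum_biUnion]
  · refine Finset.sum_congr rfl fun n _ => ?_
    rw [Finset.sum_image]
    intro f _ g _ h
    exact List.ofFn_inj.mp h
  · intro m _ n _ hmn
    apply Finset.disjoint_left.mpr
    intro a ha hb
    simp only [Finset.mem_image, Finset.mem_univ, true_and] at ha hb
    obtain ⟨f, rfl⟩ := ha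
    obtain ⟨g, hg⟩ := hb
    exact hmn (by simpa using congrArg List.length hg.symm)

lemma substCoeff_eq' (B : List Bool → R) (hB0 : B [] = 0) (A : List Bool → R)
    {w : List Bool} {N : ℕ} (hN : w.length ≤ N) :
    substCoeff A B w = ∑ s ∈ words N, A s * mCoeff B s w := by
  rw [substCoeff_eq]
  apply Finset.sum_subset
  · intro s hs
    rw [mem_words] at *
    omega
  · intro s _ hns
    rw [mem_words] at hns
    rw [mCoeff_eq_zero B hB0 s w (by omega), mul_zero]

lemma substCoeff_delta (B : List Bool → R) (w : List Bool) :
    substCoeff delta B w = delta w := by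
  rw [substCoeff_eq, Finset.sum_eq_single ([] : List Bool)]
  · simp
  · intro s _ hne
    simp [delta, hne]
  · intro h
    exact absurd (mem_words.mpr (by simp)) h

lemma substCoeff_ncMul (B : List Bool → R) (hB0 : B [] = 0) (A A' : List Bool → R)
    (w : List Bool) :
    substCoeff (ncMul A A') B w = ncMul (substCoeff A B) (substCoeff A' B) w := by
  have hR : ncMul (substCoeff A B) (substCoeff A' B) w
      = ∑ s1 ∈ words w.length, ∑ s2 ∈ words w.length,
          A s1 * A' s2 * mCoeff B (s1 ++ s2) w := by
    unfold ncMul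
    have h1 : ∀ k ∈ Finset.range (w.length + 1),
        substCoeff A B (w.take k) * substCoeff A' B (w.drop k)
        = ∑ s1 ∈ words w.length, ∑ s2 ∈ words w.length,
            A s1 * mCoeff B s1 (w.take k) * (A' s2 * mCoeff B s2 (w.drop k)) := by
      intro k hk
      simp only [Finset.mem_range] at hk
      rw [substCoeff_eq' B hB0 A (N := w.length) (by rw [List.length_take]; omega),
        substCoeff_eq' B hB0 A' (N := w.length) (by rw [List.length_drop]; omega),
        Finset.sum_mul_sum]
    rw [Finset.sum_congr rfl h1, Finset.sum_comm]
    refine Finset.sum_congr rfl fun s1 _ => ?_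
    rw [Finset.sum_comm]
    refine Finset.sum_congr rfl fun s2 _ => ?_
    rw [mCoeff_append]
    show _ = A s1 * A' s2 *
      ∑ k ∈ Finset.range (w.length + 1), mCoeff B s1 (w.take k) * mCoeff B s2 (w.drop k)
    rw [Finset.mul_sum]
    exact Finset.sum_congr rfl fun k _ => by ring
  rw [hR, substCoeff_eq]
  have h2 : ∀ s ∈ words w.length, ncMul A A' s * mCoeff B s w
      = ∑ k ∈ Finset.range (s.length + 1), A (s.take k) * A' (s.drop k) * mCoeff B s w := by
    intro s _
    unfold ncMul
    rw [Finset.sum_mul]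
  rw [Finset.sum_congr rfl h2, Finset.sum_sigma']
  have h3 : ∑ s1 ∈ words w.length, ∑ s2 ∈ words w.length, A s1 * A' s2 * mCoeff B (s1 ++ s2) w
      = ∑ p ∈ (words w.length ×ˢ words w.length).filter
          (fun p => p.1.length + p.2.length ≤ w.length),
          A p.1 * A' p.2 * mCoeff B (p.1 ++ p.2) w := by
    rw [← Finset.sum_product']
    symm
    apply Finset.sum_subset (Finset.filter_subset _ _)
    intro p hp hnp
    simp only [Finset.mem_filter, hp, true_and, not_le] at hnp
    rw [mCoeff_eq_zero B hB0 _ w (by rw [List.length_append]; omega), mul_zero]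
  rw [h3]
  apply Finset.sum_nbij' (fun x : Σ _ : List Bool, ℕ => (x.1.take x.2, x.1.drop x.2))
    (fun p : List Bool × List Bool => ⟨p.1 ++ p.2, p.1.length⟩)
  · rintro ⟨s, k⟩ ha
    simp only [Finset.mem_sigma, Finset.mem_range, mem_words] at ha
    simp only [Finset.mem_filter, Finset.mem_product, mem_words, List.length_take,
      List.length_drop]
    omega
  · rintro ⟨p1, p2⟩ hp
    simp only [Finset.mem_filter, Finset.mem_product, mem_words] at hp
    simp only [Finset.mem_sigma, Finset.mem_range, mem_words, List.length_append]
    omega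
  · rintro ⟨s, k⟩ ha
    simp only [Finset.mem_sigma, Finset.mem_range, mem_words] at ha
    refine Sigma.ext (List.take_append_drop k s) (heq_of_eq ?_)
    show (List.take k s).length = k
    rw [List.length_take]
    omega
  · rintro ⟨p1, p2⟩ _
    simp [List.take_left, List.drop_left]
  · rintro ⟨s, k⟩ _
    simp only [List.take_append_drop]

end H

section I
variable {R : Type*} [CommRing R]

lemma shSum_delta (u v : List Bool) : shSum (delta : List Bool → R) u v = delta u * delta v := by
  match u, v with
  | [], v => simp
  | x :: u, v =>
    have h : shSum (delta : List Bool → R) (x :: u) v = 0 := by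
      apply List.sum_eq_zero
      intro r hr
      rcases List.mem_map.mp hr with ⟨w, hw, rfl⟩
      have hl := length_of_mem_shuffles (x :: u) v w hw
      have : w ≠ [] := by
        intro h; subst h; simp only [List.length_nil, List.length_cons] at hl; omega
      simp [this]
    rw [h]
    simp [delta]

lemma shSum_zero_pair (C : List Bool → R) (hC0 : C [] = 0)
    (hC : ∀ a b : List Bool, a ≠ [] → b ≠ [] → shSum C a b = 0) (a b : List Bool) :
    shSum C a b = C a * delta b + delta a * C b := by
  match a, b with
  | [], [] => simp [hC0]
  | [], y :: b => simp [delta]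
  | x :: a, [] => simp [delta]
  | x :: a, y :: b =>
    rw [hC (x :: a) (y :: b) (by simp) (by simp)]
    simp [delta]

lemma E0_prim : ∀ a b : List Bool, a ≠ [] → b ≠ [] → shSum (E0 : List Bool → R) a b = 0 := by
  intro a b ha hb
  apply List.sum_eq_zero
  intro r hr
  rcases List.mem_map.mp hr with ⟨w, hw, rfl⟩
  have hl := length_of_mem_shuffles a b w hw
  have ha' : 0 < a.length := List.length_pos_iff.mpr ha
  have hb' : 0 < b.length := List.length_pos_iff.mpr hb
  have : w ≠ [false] := by
    intro h
    rw [h] at hl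
    simp at hl
    omega
  simp [E0, this]

lemma sum_delta_take (v : List Bool) (Y : ℕ → R) :
    ∑ j ∈ Finset.range (v.length + 1), delta (v.take j) * Y j = Y 0 := by
  rw [Finset.sum_range_succ']
  have h : ∀ j ∈ Finset.range v.length, delta (v.take (j+1)) * Y (j+1) = 0 := by
    intro j hj
    simp only [Finset.mem_range] at hj
    have hv : v ≠ [] := by rintro rfl; simp at hj
    have : v.take (j+1) ≠ [] := by simp [List.take_eq_nil_iff, hv]
    simp [this]
  rw [Finset.sum_congr rfl h]
  simp

lemma shSum_ncMul_prim (C : List Bool → R) (hC0 : C [] = 0)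
    (hC : ∀ a b : List Bool, a ≠ [] → b ≠ [] → shSum C a b = 0) (M : List Bool → R)
    (u v : List Bool) :
    shSum (ncMul C M) u v
      = (∑ i ∈ Finset.range (u.length + 1), C (u.take i) * shSum M (u.drop i) v)
        + ∑ j ∈ Finset.range (v.length + 1), C (v.take j) * shSum M u (v.drop j) := by
  rw [shSum_ncMul]
  have h1 : ∀ i ∈ Finset.range (u.length + 1), ∀ j ∈ Finset.range (v.length + 1),
      shSum C (u.take i) (v.take j) * shSum M (u.drop i) (v.drop j)
      = C (u.take i) * delta (v.take j) * shSum M (u.drop i) (v.drop j)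
        + delta (u.take i) * (C (v.take j) * shSum M (u.drop i) (v.drop j)) := by
    intro i _ j _
    rw [shSum_zero_pair C hC0 hC]
    ring
  rw [Finset.sum_congr rfl fun i hi => Finset.sum_congr rfl (h1 i hi)]
  rw [Finset.sum_congr rfl fun i _ => Finset.sum_add_distrib, Finset.sum_add_distrib]
  congr 1
  · refine Finset.sum_congr rfl fun i _ => ?_
    have : ∀ j ∈ Finset.range (v.length + 1),
        C (u.take i) * delta (v.take j) * shSum M (u.drop i) (v.drop j)
        = delta (v.take j) * (C (u.take i) * shSum M (u.drop i) (v.drop j)) := by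
      intro j _; ring
    rw [Finset.sum_congr rfl this, sum_delta_take v
      (fun j => C (u.take i) * shSum M (u.drop i) (v.drop j)), List.drop_zero]
  · rw [Finset.sum_comm]
    refine Finset.sum_congr rfl fun j _ => ?_
    rw [sum_delta_take u (fun i => C (v.take j) * shSum M (u.drop i) (v.drop j)), List.drop_zero]

theorem shSum_mCoeff (B : List Bool → R) (hB0 : B [] = 0)
    (hBprim : ∀ a b : List Bool, a ≠ [] → b ≠ [] → shSum B a b = 0) :
    ∀ (s u v : List Bool), shSum (mCoeff B s) u v
      = ((desh s).map (fun p => mCoeff B p.1 u * mCoeff B p.2 v)).sum := by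
  intro s
  induction s with
  | nil =>
    intro u v
    rw [shSum_congr (fun w => mCoeff_nil B w), shSum_delta]
    simp [desh]
  | cons c s ih =>
    intro u v
    have key : ∀ (C : List Bool → R), C [] = 0 →
        (∀ a b : List Bool, a ≠ [] → b ≠ [] → shSum C a b = 0) →
        shSum (ncMul C (mCoeff B s)) u v
        = ((desh s).map (fun p => ncMul C (mCoeff B p.1) u * mCoeff B p.2 v)).sum
          + ((desh s).map (fun p => mCoeff B p.1 u * ncMul C (mCoeff B p.2) v)).sum := by
      intro C hC0 hC
      rw [shSum_ncMul_prim C hC0 hC]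
      congr 1
      · have h1 : ∀ i ∈ Finset.range (u.length + 1),
            C (u.take i) * shSum (mCoeff B s) (u.drop i) v
            = ((desh s).map (fun p =>
                C (u.take i) * (mCoeff B p.1 (u.drop i) * mCoeff B p.2 v))).sum := by
          intro i _
          rw [ih, list_sum_map_mul_left]
        rw [Finset.sum_congr rfl h1, sum_comm_list]
        refine congrArg _ (List.map_congr_left fun p _ => ?_)
        show ∑ i ∈ Finset.range (u.length + 1),
            C (u.take i) * (mCoeff B p.1 (u.drop i) * mCoeff B p.2 v)
          = ncMul C (mCoeff B p.1) u * mCoeff B p.2 v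
        rw [show ncMul C (mCoeff B p.1) u
            = ∑ i ∈ Finset.range (u.length + 1), C (u.take i) * mCoeff B p.1 (u.drop i) from rfl,
          Finset.sum_mul]
        exact Finset.sum_congr rfl fun i _ => by ring
      · have h1 : ∀ j ∈ Finset.range (v.length + 1),
            C (v.take j) * shSum (mCoeff B s) u (v.drop j)
            = ((desh s).map (fun p =>
                C (v.take j) * (mCoeff B p.1 u * mCoeff B p.2 (v.drop j)))).sum := by
          intro j _
          rw [ih, list_sum_map_mul_left]
        rw [Finset.sum_congr rfl h1, sum_comm_list]
        refine congrArg _ (List.map_congr_left fun p _ => ?_)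
        show ∑ j ∈ Finset.range (v.length + 1),
            C (v.take j) * (mCoeff B p.1 u * mCoeff B p.2 (v.drop j))
          = mCoeff B p.1 u * ncMul C (mCoeff B p.2) v
        rw [show ncMul C (mCoeff B p.2) v
            = ∑ j ∈ Finset.range (v.length + 1), C (v.take j) * mCoeff B p.2 (v.drop j) from rfl,
          Finset.mul_sum]
        exact Finset.sum_congr rfl fun j _ => by ring
    rw [show desh (c :: s) = ((desh s).map (fun p => (c :: p.1, p.2)))
          ++ ((desh s).map (fun p => (p.1, c :: p.2))) from rfl,
      List.map_append, List.sum_append, List.map_map, List.map_map]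
    cases c with
    | true =>
      rw [shSum_congr (fun w => mCoeff_true B s w) u v, key B hB0 hBprim]
      rfl
    | false =>
      rw [shSum_congr (fun w => mCoeff_false B s w) u v,
        key E0 (by simp [E0]) E0_prim]
      congr 1
      · exact congrArg _ (List.map_congr_left fun p _ => by
          rw [Function.comp_apply, ← mCoeff_false])
      · exact congrArg _ (List.map_congr_left fun p _ => by
          rw [Function.comp_apply, ← mCoeff_false])

end I

section Main
variable {R : Type*} [CommRing R]

theorem substCoeff_groupLike (A B : List Bool → R) (hA : IsGroupLike A) (hB : IsPrimitive B) :
    IsGroupLike (substCoeff A B) := by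
  obtain ⟨hA0, hAsh⟩ := hA
  obtain ⟨hB0, hBsh⟩ := hB
  constructor
  · rw [substCoeff_eq]
    have hw : words (0 : ℕ) = {([] : List Bool)} := by
      ext s
      simp [mem_words, List.length_eq_zero_iff]
    rw [show (([] : List Bool)).length = 0 from rfl, hw]
    simp [hA0]
  · intro u v
    set N := u.length + v.length with hNdef
    set g := fun p : List Bool × List Bool => mCoeff B p.1 u * mCoeff B p.2 v with hg
    have step1 : ((shuffles u v).map (substCoeff A B)).sum
        = ∑ s ∈ words N, A s * shSum (mCoeff B s) u v := by
      have e : ∀ w ∈ shuffles u v, substCoeff A B w = ∑ s ∈ words N, A s * mCoeff B s w := by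
        intro w hw
        exact substCoeff_eq' B hB0 A (by rw [length_of_mem_shuffles u v w hw])
      rw [List.map_congr_left e, ← sum_comm_list]
      refine Finset.sum_congr rfl fun s _ => ?_
      rw [list_sum_map_mul_left]
      rfl
    have step2 : ∀ s ∈ words N, A s * shSum (mCoeff B s) u v
        = ∑ p ∈ words N ×ˢ words N, A s * ((cnt p (desh s) : R) * g p) := by
      intro s hs
      rw [shSum_mCoeff B hB0 (fun a b ha hb => hBsh a b ha hb)]
      rw [list_sum_map_cnt (desh s) g (words N ×ˢ words N) (fun p hp => by
        have := desh_lengths s p hp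
        rw [mem_words] at hs
        simp only [Finset.mem_product, mem_words]
        omega)]
      rw [Finset.mul_sum]
    have step3 : ∀ p ∈ words N ×ˢ words N,
        ∑ s ∈ words N, A s * ((cnt p (desh s) : R) * g p) = A p.1 * A p.2 * g p := by
      rintro ⟨p1, p2⟩ hp
      simp only [Finset.mem_product, mem_words] at hp
      by_cases hlen : p1.length + p2.length ≤ N
      · have e : ∀ s ∈ words N, A s * ((cnt (p1, p2) (desh s) : R) * g (p1, p2))
            = (cnt s (shuffles p1 p2) : R) * A s * g (p1, p2) := by
          intro s _
          rw [cnt_desh s p1 p2]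
          ring
        rw [Finset.sum_congr rfl e, ← Finset.sum_mul]
        congr 1
        rw [← list_sum_map_cnt (shuffles p1 p2) A (words N) (fun w hw => by
          rw [mem_words, length_of_mem_shuffles p1 p2 w hw]; omega)]
        exact (hAsh p1 p2).symm
      · have hg0 : g (p1, p2) = 0 := by
          rw [hg]
          simp only []
          rcases (by omega : u.length < p1.length ∨ v.length < p2.length) with h | h
          · rw [mCoeff_eq_zero B hB0 _ _ h, zero_mul]
          · rw [mCoeff_eq_zero B hB0 _ _ h, mul_zero]
        rw [hg0]
        simp
    rw [step1, Finset.sum_congr rfl step2, Finset.sum_comm, Finset.sum_congr rfl step3,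
      Finset.sum_product]
    rw [substCoeff_eq' B hB0 A (N := N) (by omega), substCoeff_eq' B hB0 A (N := N) (by omega),
      Finset.sum_mul_sum]
    refine Finset.sum_congr rfl fun s1 _ => Finset.sum_congr rfl fun s2 _ => ?_
    rw [hg]
    simp only []
    ring


end Main

/-- If `A` is group-like and `B` is primitive, then `A(e₀,B)` is group-like, and
`A(e₀,B)⁻¹ = A⁻¹(e₀,B)`: for any two-sided inverse `A'` of `A` in the ring of
noncommutative series, `A'(e₀,B)` is a two-sided inverse of `A(e₀,B)`. -/
theorem stmt13 {R : Type*} [CommRing R] [Algebra ℚ R] (A B : List Bool → R)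
    (hA : IsGroupLike A) (hB : IsPrimitive B) :
    IsGroupLike (substCoeff A B) ∧
      ∀ A' : List Bool → R,
        (∀ w, ncMul A A' w = if w = [] then 1 else 0) →
        (∀ w, ncMul A' A w = if w = [] then 1 else 0) →
        (∀ w, ncMul (substCoeff A B) (substCoeff A' B) w = if w = [] then 1 else 0) ∧
        (∀ w, ncMul (substCoeff A' B) (substCoeff A B) w = if w = [] then 1 else 0) := by
  refine ⟨substCoeff_groupLike A B hA hB, ?_⟩
  intro A' hinv1 hinv2
  have key : ∀ (X Y : List Bool → R), (∀ w, ncMul X Y w = if w = [] then 1 else 0) →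
      ∀ w, ncMul (substCoeff X B) (substCoeff Y B) w = if w = [] then 1 else 0 := by
    intro X Y hXY w
    rw [← substCoeff_ncMul B hB.1]
    have hfun : ncMul X Y = (delta : List Bool → R) := funext fun w' => by
      rw [hXY w']; rfl
    rw [hfun, substCoeff_delta]
    rfl
  exact ⟨key A A' hinv1, key A' A hinv2⟩
end

section
/- Let $R$ be a commutative $\mathbb{Q}$-algebra and $P \in R\langle\langle e_0,e_1\rangle\rangle$ group-like with $P_{e_0} = 0$. Then for all $r \ge 1$, positive integers $n_0, n_1,\dots,n_r$: $P_{e_0^{n_r-1}e_1 \cdots e_0^{n_1-1}e_1 e_0^{n_0-1}} = \sum_{\substack{k_1,\dots,k_r \ge 0 \\ k_1+\cdots+k_r = n_0-1}} \prod_{i=1}^r \binom{-n_i}{k_i} \, P_{e_0^{n_r+k_r-1}e_1 \cdots e_0^{n_1+k_1-1}e_1}$, where $\binom{-n}{k} = (-1)^k \binom{k+n-1}{k}$. -/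
/-- The word `e₀^{m_r-1} e₁ ⋯ e₀^{m_1-1} e₁ e₀^t` on `{e₀, e₁}` (with `e₀ = false`,
`e₁ = true`), where `m : Fin r → ℕ` lists the exponents `m_1, …, m_r`. -/
def wrd (r : ℕ) (m : Fin r → ℕ) (t : ℕ) : List Bool :=
  (List.ofFn fun i : Fin r =>
      List.replicate (m (Fin.rev i) - 1) false ++ [true]).flatten
    ++ List.replicate t false

theorem shuffles_singleton {α : Type*} (x : α) (ys : List α) :
    shuffles [x] ys = (List.range (ys.length + 1)).map (fun i => ys.insertIdx i x) := by
  induction ys with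
  | nil => simp [shuffles, List.range_succ]
  | cons y ys ih =>
    rw [show shuffles [x] (y :: ys)
        = (x :: y :: ys) :: (shuffles [x] ys).map (y :: ·) by simp [shuffles]]
    rw [ih, List.map_map]
    conv_rhs => rw [List.range_succ_eq_map, List.map_cons, List.map_map]
    simp only [List.insertIdx_zero]
    congr 1

def word (L : List ℕ) (t : ℕ) : List Bool :=
  (L.map fun a => List.replicate a false ++ [true]).flatten ++ List.replicate t false

theorem word_nil (t : ℕ) : word [] t = List.replicate t false := by simp [word]

theorem word_cons (a : ℕ) (L : List ℕ) (t : ℕ) :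
    word (a :: L) t = (List.replicate a false ++ [true]) ++ word L t := by
  simp [word]

theorem insertIdx_replicate_append {α : Type*} (x : α) :
    ∀ (a i : ℕ), i ≤ a → ∀ (ys : List α),
      (List.replicate a x ++ ys).insertIdx i x = List.replicate (a + 1) x ++ ys := by
  intro a
  induction a with
  | zero => intro i hi ys; interval_cases i; simp
  | succ b ihb =>
    intro i hi ys
    match i with
    | 0 => rw [List.insertIdx_zero, show (List.replicate (b+1+1) x ++ ys)
        = x :: (List.replicate (b+1) x ++ ys) from by rw [List.replicate_succ, List.cons_append]]
    | i + 1 =>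
      rw [show List.replicate (b+1) x ++ ys = x :: (List.replicate b x ++ ys) from by
          rw [List.replicate_succ, List.cons_append],
        List.insertIdx_succ_cons, ihb i (by omega) ys,
        show (List.replicate (b+1+1) x ++ ys) = x :: (List.replicate (b+1) x ++ ys) from by
          rw [List.replicate_succ, List.cons_append]]

theorem insertIdx_append_right {α : Type*} (x : α) :
    ∀ (xs ys : List α) (j : ℕ),
      (xs ++ ys).insertIdx (xs.length + j) x = xs ++ ys.insertIdx j x := by
  intro xs
  induction xs with
  | nil => simp
  | cons z xs ih =>
    intro ys j
    rw [List.cons_append, show (z :: xs).length + j = (xs.length + j) + 1 by simp; omega,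
      List.insertIdx_succ_cons, ih, List.cons_append]

theorem insert_sum {R : Type*} [AddCommMonoid R] :
    ∀ (L : List ℕ) (t : ℕ) (P : List Bool → R),
      ∑ i ∈ Finset.range ((word L t).length + 1), P ((word L t).insertIdx i false)
        = (t + 1) • P (word L (t + 1))
          + ∑ j ∈ Finset.range L.length,
              (L.getD j 0 + 1) • P (word (L.set j (L.getD j 0 + 1)) t) := by
  intro L
  induction L with
  | nil =>
    intro t P
    simp only [word_nil, List.length_nil, List.length_replicate]
    rw [Finset.sum_congr rfl (fun i hi => by
      rw [show (List.replicate t false).insertIdx i false = List.replicate (t+1) false from by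
        have := insertIdx_replicate_append false t i (by
          simpa using Nat.lt_succ_iff.mp (Finset.mem_range.mp hi)) []
        simpa using this])]
    simp [Finset.sum_const]
  | cons a L ih =>
    intro t P
    have hlen : (word (a :: L) t).length + 1 = (a + 1) + ((word L t).length + 1) := by
      simp [word_cons]; omega
    rw [hlen, Finset.sum_range_add]
    have h1 : ∀ i ∈ Finset.range (a + 1),
        P ((word (a :: L) t).insertIdx i false) = P (word ((a + 1) :: L) t) := by
      intro i hi
      rw [word_cons, List.append_assoc,
        insertIdx_replicate_append false a i (Nat.lt_succ_iff.mp (Finset.mem_range.mp hi)),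
        word_cons, List.append_assoc]
    rw [Finset.sum_congr rfl h1, Finset.sum_const, Finset.card_range]
    have h2 : ∀ j, (word (a :: L) t).insertIdx ((a + 1) + j) false
        = (List.replicate a false ++ [true]) ++ (word L t).insertIdx j false := by
      intro j
      rw [word_cons, show a + 1 + j = (List.replicate a false ++ [true] : List Bool).length + j
        by simp, insertIdx_append_right]
    simp only [h2]
    rw [ih t (fun w => P ((List.replicate a false ++ [true]) ++ w))]
    simp only [List.length_cons]
    rw [Finset.sum_range_succ']
    simp only [List.getD_cons_zero, List.getD_cons_succ, List.set_cons_zero, List.set_cons_succ,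
      word_cons, List.append_assoc]
    abel

def dlt {r : ℕ} (i : Fin r) : Fin r → ℕ := fun j => if j = i then 1 else 0

theorem wrd_eq_word (r : ℕ) (m : Fin r → ℕ) (t : ℕ) :
    wrd r m t = word (List.ofFn fun i => m (Fin.rev i) - 1) t := by
  simp only [wrd, word, List.map_ofFn]
  rfl

theorem ofFn_set (r : ℕ) (m : Fin r → ℕ) (hm : ∀ i, 1 ≤ m i) (j : Fin r) :
    (List.ofFn fun i => m (Fin.rev i) - 1).set (↑j) (m (Fin.rev j))
      = List.ofFn fun i => (m + dlt (Fin.rev j)) (Fin.rev i) - 1 := by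
  apply List.ext_getElem
  · simp
  · intro i h1 h2
    simp only [List.getElem_set, List.getElem_ofFn] at *
    simp only [List.length_set, List.length_ofFn] at h1
    by_cases hij : (↑j : ℕ) = i
    · subst hij
      rw [if_pos rfl]
      have hj : (⟨(j : ℕ), h1⟩ : Fin r) = j := Fin.ext rfl
      rw [hj]
      simp [dlt, Pi.add_apply]
    · rw [if_neg hij]
      have hne : Fin.rev (⟨i, h1⟩ : Fin r) ≠ Fin.rev j := by
        simp only [ne_eq, Fin.rev_inj]
        intro hc
        exact hij (by rw [← hc])
      simp only [dlt, Pi.add_apply]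
      split
      · next hc =>
          exact absurd (congrArg Fin.val (Fin.rev_inj.mp hc)).symm hij
      · rfl

theorem wrd_rec {R : Type*} [CommRing R] (P : List Bool → R) (hP : IsGroupLike P)
    (hP0 : P [false] = 0) (r : ℕ) (m : Fin r → ℕ) (hm : ∀ i, 1 ≤ m i) (t : ℕ) :
    ((t + 1 : ℕ) : R) * P (wrd r m (t + 1))
      = - ∑ i : Fin r, (m i : R) * P (wrd r (m + dlt i) t) := by
  have h0 := hP.2 [false] (wrd r m t)
  rw [hP0, zero_mul, shuffles_singleton, List.map_map] at h0
  have hconv : ∀ (nn : ℕ) (f : ℕ → R), ((List.range nn).map f).sum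
      = ∑ i ∈ Finset.range nn, f i := fun nn f => rfl
  rw [hconv] at h0
  set L : List ℕ := List.ofFn fun i => m (Fin.rev i) - 1 with hL
  rw [show wrd r m t = word L t from wrd_eq_word r m t] at h0
  rw [show (fun i => (P ∘ fun i => List.insertIdx (word L t) i false) i)
      = fun i => P ((word L t).insertIdx i false) from rfl] at h0
  rw [insert_sum L t P] at h0
  have hlen : L.length = r := by simp [hL]
  rw [show (∑ j ∈ Finset.range L.length, (L.getD j 0 + 1) • P (word (L.set j (L.getD j 0 + 1)) t))
      = ∑ j : Fin r, (m j : R) * P (wrd r (m + dlt j) t) from ?_] at h0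
  · rw [← wrd_eq_word] at h0
    rw [show ((t : ℕ) + 1) • P (wrd r m (t + 1)) = ((t + 1 : ℕ) : R) * P (wrd r m (t + 1)) from by
      push_cast [nsmul_eq_mul]; ring] at h0
    exact eq_neg_of_add_eq_zero_left h0.symm
  · rw [hlen, Finset.sum_range fun j => (L.getD j 0 + 1) • P (word (L.set j (L.getD j 0 + 1)) t)]
    rw [← Equiv.sum_comp Fin.revPerm fun i => (m i : R) * P (wrd r (m + dlt i) t)]
    apply Finset.sum_congr rfl
    intro j _
    have hget : L.getD (↑j) 0 = m (Fin.rev j) - 1 := by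
      rw [List.getD_eq_getElem _ _ (by rw [hlen]; exact j.isLt)]
      simp [hL]
    have hval : L.getD (↑j) 0 + 1 = m (Fin.rev j) := by
      rw [hget]; have := hm (Fin.rev j); omega
    rw [hval, ofFn_set r m hm j, ← wrd_eq_word]
    simp only [Fin.revPerm_apply]
    rw [nsmul_eq_mul]

def cf {R : Type*} [CommRing R] (r : ℕ) (m k : Fin r → ℕ) : R :=
  ∏ i, (-1 : R) ^ (k i) * ((k i + m i - 1).choose (k i) : R)

theorem sum_dlt {r : ℕ} (i : Fin r) : ∑ j, dlt i j = 1 := by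
  simp [dlt, Finset.sum_ite_eq']

theorem dlt_same {r : ℕ} (i : Fin r) : dlt i i = 1 := by simp [dlt]

theorem dlt_ne {r : ℕ} {i j : Fin r} (h : j ≠ i) : dlt i j = 0 := by simp [dlt, h]

theorem cf_step {R : Type*} [CommRing R] {r : ℕ} (m : Fin r → ℕ) (hm : ∀ i, 1 ≤ m i)
    (k' : Fin r → ℕ) (i : Fin r) :
    ((k' i + 1 : ℕ) : R) * cf r m (k' + dlt i) = -((m i : R) * cf r (m + dlt i) k') := by
  obtain ⟨b, hb⟩ : ∃ b, m i = b + 1 := ⟨m i - 1, by have := hm i; omega⟩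
  unfold cf
  rw [← Finset.mul_prod_erase _ _ (Finset.mem_univ i),
    ← Finset.mul_prod_erase _ (fun j => (-1 : R) ^ (k' j) * ((k' j + (m + dlt i) j - 1).choose (k' j) : R)) (Finset.mem_univ i)]
  have hrest : ∏ j ∈ Finset.univ.erase i, (-1 : R) ^ ((k' + dlt i) j) * (((k' + dlt i) j + m j - 1).choose ((k' + dlt i) j) : R)
      = ∏ j ∈ Finset.univ.erase i, (-1 : R) ^ (k' j) * ((k' j + (m + dlt i) j - 1).choose (k' j) : R) := by
    apply Finset.prod_congr rfl
    intro j hj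
    have hji : j ≠ i := Finset.ne_of_mem_erase hj
    simp [dlt, hji, Pi.add_apply]
  rw [hrest]
  set Q : R := ∏ j ∈ Finset.univ.erase i, (-1 : R) ^ (k' j) * ((k' j + (m + dlt i) j - 1).choose (k' j) : R)
  have h1 : (k' + dlt i) i = k' i + 1 := by simp [dlt, Pi.add_apply]
  have h2 : (m + dlt i) i = m i + 1 := by simp [dlt, Pi.add_apply]
  rw [h1, h2, hb]
  set a' := k' i
  have hch : (a' + 1) * ((a' + 1 + (b + 1) - 1).choose (a' + 1)) = (b + 1) * ((a' + (b + 1 + 1) - 1).choose a') := by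
    have e1 : a' + 1 + (b + 1) - 1 = a' + b + 1 := by omega
    have e2 : a' + (b + 1 + 1) - 1 = a' + b + 1 := by omega
    rw [e1, e2]
    have := Nat.choose_succ_right_eq (a' + b + 1) a'
    have e3 : a' + b + 1 - a' = b + 1 := by omega
    rw [e3] at this
    rw [Nat.mul_comm (a' + 1), Nat.mul_comm (b + 1)]
    exact this
  have hcast : ((a' + 1 : ℕ) : R) * (((a' + 1 + (b + 1) - 1).choose (a' + 1) : ℕ) : R)
      = ((b + 1 : ℕ) : R) * (((a' + (b + 1 + 1) - 1).choose a' : ℕ) : R) := by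
    rw [← Nat.cast_mul, ← Nat.cast_mul, hch]
  push_cast at hcast ⊢
  calc ((a' : R) + 1) * ((-1 : R) ^ (a' + 1) * ((a' + 1 + (b + 1) - 1).choose (a' + 1) : R) * Q)
      = -((-1 : R) ^ a') * (((a' : R) + 1) * ((a' + 1 + (b + 1) - 1).choose (a' + 1) : R)) * Q := by
        rw [pow_succ]; ring
    _ = -((-1 : R) ^ a') * (((b : R) + 1) * ((a' + (b + 1 + 1) - 1).choose a' : R)) * Q := by
        rw [hcast]
    _ = -(((b : R) + 1) * ((-1 : R) ^ a' * ((a' + (b + 1 + 1) - 1).choose a' : R) * Q)) := by ring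

theorem core {R : Type*} [CommRing R] [Algebra ℚ R] (P : List Bool → R) (hP : IsGroupLike P)
    (hP0 : P [false] = 0) (r : ℕ) :
    ∀ (t : ℕ) (m : Fin r → ℕ), (∀ i, 1 ≤ m i) →
      P (wrd r m t)
        = ∑ k ∈ Finset.Nat.antidiagonalTuple r t, cf r m k * P (wrd r (m + k) 0) := by
  intro t
  induction t with
  | zero =>
    intro m hm
    rw [Finset.Nat.antidiagonalTuple_zero_right, Finset.sum_singleton]
    have h1 : cf (R := R) r m (0 : Fin r → ℕ) = 1 := by
      unfold cf; apply Finset.prod_eq_one; intro i _; simp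
    rw [h1, one_mul, add_zero]
  | succ t ih =>
    intro m hm
    have hu : IsUnit (((t + 1 : ℕ) : R)) := by
      have h1 : ((t + 1 : ℕ) : ℚ) ≠ 0 := by positivity
      have h2 := (isUnit_iff_ne_zero.mpr h1).map (algebraMap ℚ R)
      rwa [map_natCast] at h2
    apply hu.mul_left_cancel
    rw [wrd_rec P hP hP0 r m hm t, Finset.mul_sum]
    have hX : ∀ k ∈ Finset.Nat.antidiagonalTuple r (t + 1),
        ((t + 1 : ℕ) : R) * (cf r m k * P (wrd r (m + k) 0))
          = ∑ i : Fin r, (k i : R) * (cf r m k * P (wrd r (m + k) 0)) := by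
      intro k hk
      rw [← Finset.sum_mul]
      congr 1
      rw [← Nat.cast_sum]
      congr 1
      exact (Finset.Nat.mem_antidiagonalTuple.mp hk).symm
    rw [Finset.sum_congr rfl hX, Finset.sum_comm]
    have hinner : ∀ i : Fin r,
        ∑ k ∈ Finset.Nat.antidiagonalTuple r (t + 1),
            (k i : R) * (cf r m k * P (wrd r (m + k) 0))
          = -((m i : R) * P (wrd r (m + dlt i) t)) := by
      intro i
      rw [← Finset.sum_filter_of_ne (p := fun k => k i ≠ 0)
        (fun k _ hne h0 => hne (by rw [h0, Nat.cast_zero, zero_mul]))]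
      have hbij : ∑ k ∈ (Finset.Nat.antidiagonalTuple r (t + 1)).filter (fun k => k i ≠ 0),
            (k i : R) * (cf r m k * P (wrd r (m + k) 0))
          = ∑ k' ∈ Finset.Nat.antidiagonalTuple r t,
              ((k' i + 1 : ℕ) : R) * (cf r m (k' + dlt i) * P (wrd r (m + (k' + dlt i)) 0)) := by
        apply Finset.sum_nbij' (fun k => k - dlt i) (fun k' => k' + dlt i)
        · intro k hk
          obtain ⟨hk1, hk2⟩ := Finset.mem_filter.mp hk
          rw [Finset.Nat.mem_antidiagonalTuple]
          have hsum := Finset.Nat.mem_antidiagonalTuple.mp hk1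
          have hpt : ∀ j, (k - dlt i) j + dlt i j = k j := by
            intro j
            by_cases hji : j = i
            · subst hji; rw [Pi.sub_apply, dlt_same]; omega
            · rw [Pi.sub_apply, dlt_ne hji]; omega
          have h2 : ∑ j, ((k - dlt i) j + dlt i j) = ∑ j, k j :=
            Finset.sum_congr rfl (fun j _ => hpt j)
          rw [Finset.sum_add_distrib, sum_dlt, hsum] at h2
          omega
        · intro k' hk'
          rw [Finset.mem_filter]
          refine ⟨?_, ?_⟩
          · rw [Finset.Nat.mem_antidiagonalTuple]
            have h2 : ∑ j, (k' + dlt i) j = ∑ j, (k' j + dlt i j) :=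
              Finset.sum_congr rfl (fun j _ => Pi.add_apply _ _ _)
            rw [h2, Finset.sum_add_distrib, sum_dlt,
              Finset.Nat.mem_antidiagonalTuple.mp hk']
          · rw [Pi.add_apply, dlt_same]
            omega
        · intro k hk
          obtain ⟨_, hk2⟩ := Finset.mem_filter.mp hk
          funext j
          by_cases hji : j = i
          · subst hji
            rw [Pi.add_apply, Pi.sub_apply, dlt_same]
            omega
          · rw [Pi.add_apply, Pi.sub_apply, dlt_ne hji]
            omega
        · intro k' _
          funext j
          by_cases hji : j = i
          · subst hji
            rw [Pi.sub_apply, Pi.add_apply, dlt_same]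
            omega
          · rw [Pi.sub_apply, Pi.add_apply, dlt_ne hji]
            omega
        · intro k hk
          obtain ⟨_, hk2⟩ := Finset.mem_filter.mp hk
          have hki : (k - dlt i) i + 1 = k i := by
            rw [Pi.sub_apply, dlt_same]
            omega
          have hback : (k - dlt i) + dlt i = k := by
            funext j
            by_cases hji : j = i
            · subst hji
              rw [Pi.add_apply, Pi.sub_apply, dlt_same]
              omega
            · rw [Pi.add_apply, Pi.sub_apply, dlt_ne hji]
              omega
          rw [hback, hki]
      rw [hbij]
      have hterm : ∀ k' ∈ Finset.Nat.antidiagonalTuple r t,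
          ((k' i + 1 : ℕ) : R) * (cf r m (k' + dlt i) * P (wrd r (m + (k' + dlt i)) 0))
            = -((m i : R) * (cf r (m + dlt i) k' * P (wrd r ((m + dlt i) + k') 0))) := by
        intro k' _
        have h1 := cf_step (R := R) m hm k' i
        have h2 : m + (k' + dlt i) = (m + dlt i) + k' := by
          rw [add_comm k', ← add_assoc]
        rw [h2, ← mul_assoc, h1]
        ring
      rw [Finset.sum_congr rfl hterm, Finset.sum_neg_distrib, ← Finset.mul_sum]
      congr 1
      congr 1
      exact (ih (m + dlt i) (fun j => le_trans (hm j) (Nat.le_add_right _ _))).symm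
    rw [Finset.sum_congr rfl (fun i _ => hinner i), Finset.sum_neg_distrib]

/-- For a group-like `P` with `P_{e₀} = 0`, and positive integers `n₀, n₁, …, n_r`
(`r ≥ 1`):
`P_{e₀^{n_r-1}e₁ ⋯ e₀^{n_1-1}e₁ e₀^{n₀-1}}
  = ∑_{k₁+⋯+k_r = n₀-1} ∏ᵢ C(-nᵢ, kᵢ) · P_{e₀^{n_r+k_r-1}e₁ ⋯ e₀^{n_1+k_1-1}e₁}`,
where `C(-n, k) = (-1)^k C(k+n-1, k)`. -/
theorem stmt14 {R : Type*} [CommRing R] [Algebra ℚ R] (P : List Bool → R)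
    (hP : IsGroupLike P) (hP0 : P [false] = 0)
    (r : ℕ) (hr : 1 ≤ r) (n : Fin (r + 1) → ℕ) (hn : ∀ i, 1 ≤ n i) :
    P (wrd r (fun i => n i.succ) (n 0 - 1))
      = ∑ k ∈ Finset.Nat.antidiagonalTuple r (n 0 - 1),
          (∏ i, (-1 : R) ^ (k i) * (Nat.choose (k i + n i.succ - 1) (k i) : R)) *
            P (wrd r (fun i => n i.succ + k i) 0) := by
  have h := core P hP hP0 r (n 0 - 1) (fun i => n i.succ) (fun i => hn i.succ)
  rw [h]
  apply Finset.sum_congr rfl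
  intro k _
  rfl
end
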